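/- arXiv:2202.00603 — 10 statements merged into one kernel-verified Lean document; each statement's English description precedes it below -/
import Mathlib

section
/- Let 0 < α < 1, B(α) > 0, t₀ ∈ ℝ, let u : [t₀, ∞) → (0,∞) be continuously differentiable, let g : (0,∞) → ℝ be positive, differentiable, and strictly increasing, let u* > 0, and define Ψ(u) = u − u* − ∫_{u*}^{u} g(u*)/g(s) ds. Then for every t ≥ t₀, the Caputo–Fabrizio fractional derivative satisfies ᶜᶠD^α_{t₀}(Ψ∘u)(t) ≤ (1 − g(u*)/g(u(t))) · ᶜᶠD^α_{t₀}u(t). -/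
/-- The Caputo–Fabrizio fractional derivative of order `α` with base point `t₀`
and normalization constant `B`:
`ᶜᶠD^α_{t₀}f(t) = (B(2−α)/(2(1−α))) ∫_{t₀}^{t} f'(x) exp(−(α/(1−α))(t−x)) dx`. -/
noncomputable def cfDeriv (B α t₀ : ℝ) (f : ℝ → ℝ) (t : ℝ) : ℝ :=
  (B * (2 - α) / (2 * (1 - α))) * ∫ x in t₀..t,
    deriv f x * Real.exp (-(α / (1 - α)) * (t - x))

/-- The function `Ψ(u) = u − u* − ∫_{u*}^{u} g(u*)/g(s) ds`. -/
noncomputable def PsiFun (g : ℝ → ℝ) (ustar u : ℝ) : ℝ :=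
  u - ustar - ∫ s in ustar..u, g ustar / g s

/-- For `0 < α < 1`, `B(α) > 0`, a positive continuously differentiable function `u` on
`[t₀,∞)`, and `g` positive, differentiable and strictly increasing on `(0,∞)`, `u* > 0`,
the Caputo–Fabrizio fractional derivative satisfies
`ᶜᶠD^α_{t₀}(Ψ∘u)(t) ≤ (1 − g(u*)/g(u(t))) ᶜᶠD^α_{t₀}u(t)` for all `t ≥ t₀`. -/
theorem cf_psi_estimate (α B t₀ : ℝ) (hα : 0 < α) (hα1 : α < 1) (hB : 0 < B)
    (u : ℝ → ℝ) (hu_pos : ∀ x ∈ Set.Ici t₀, 0 < u x)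
    (hu : ContDiffOn ℝ 1 u (Set.Ici t₀))
    (g : ℝ → ℝ)
    (hg_pos : ∀ s ∈ Set.Ioi (0 : ℝ), 0 < g s)
    (hg_diff : DifferentiableOn ℝ g (Set.Ioi 0))
    (hg_mono : StrictMonoOn g (Set.Ioi 0))
    (ustar : ℝ) (hustar : 0 < ustar) :
    ∀ t : ℝ, t₀ ≤ t →
      cfDeriv B α t₀ (fun x => PsiFun g ustar (u x)) t ≤
        (1 - g ustar / g (u t)) * cfDeriv B α t₀ u t := by
  intro t ht
  have hα' : 0 < 1 - α := by linarith
  have hlam : 0 < α / (1 - α) := div_pos hα hα'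
  set lam : ℝ := α / (1 - α) with hlam_def
  have hK : 0 ≤ B * (2 - α) / (2 * (1 - α)) :=
    div_nonneg (by nlinarith) (by linarith)
  have hc : 0 < g ustar := hg_pos ustar hustar
  have hut : 0 < u t := hu_pos t ht
  have hgut : 0 < g (u t) := hg_pos (u t) hut
  have hgc : ContinuousOn g (Set.Ioi 0) := hg_diff.continuousOn
  have hgne : ∀ s ∈ Set.Ioi (0 : ℝ), g s ≠ 0 := fun s hs => (hg_pos s hs).ne'
  -- the exponential weight
  set E : ℝ → ℝ := fun x => Real.exp (-lam * (t - x)) with hE_def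
  have hE_pos : ∀ x, 0 < E x := fun x => Real.exp_pos _
  have hE_cont : Continuous E :=
    Real.continuous_exp.comp (continuous_const.mul (continuous_const.sub continuous_id))
  have hE_deriv : ∀ x : ℝ, HasDerivAt E (lam * E x) x := by
    intro x
    have h1 : HasDerivAt (fun y : ℝ => -lam * (t - y)) (-lam * (0 - 1)) x :=
      ((hasDerivAt_const x t).sub (hasDerivAt_id x)).const_mul (-lam)
    have h2 := h1.exp
    convert h2 using 1
    ring
  -- the auxiliary function q and its primitive F
  set q : ℝ → ℝ := fun s => g ustar / g (u t) - g ustar / g s with hq_def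
  have hq_cont : ContinuousOn q (Set.Ioi 0) :=
    continuousOn_const.sub (continuousOn_const.div hgc hgne)
  have hq_int : ∀ a b : ℝ, 0 < a → 0 < b →
      IntervalIntegrable q MeasureTheory.volume a b := by
    intro a b ha hb
    apply (hq_cont.mono ?_).intervalIntegrable
    intro x hx
    exact lt_of_lt_of_le (lt_min ha hb) hx.1
  set F : ℝ → ℝ := fun v => ∫ s in v..(u t), q s with hF_def
  have hF_deriv : ∀ v : ℝ, 0 < v → HasDerivAt F (-(q v)) v := by
    intro v hv
    exact intervalIntegral.integral_hasDerivAt_left (hq_int v (u t) hv hut)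
      (hq_cont.stronglyMeasurableAtFilter isOpen_Ioi v hv)
      (hq_cont.continuousAt (Ioi_mem_nhds hv))
  have hF_cont : ContinuousOn F (Set.Ioi 0) := fun v hv =>
    ((hF_deriv v hv).continuousAt).continuousWithinAt
  have hF_ut : F (u t) = 0 := intervalIntegral.integral_same
  have hF_nonpos : ∀ v : ℝ, 0 < v → F v ≤ 0 := by
    intro v hv
    rcases le_total v (u t) with h | h
    · have h0 : 0 ≤ ∫ s in v..(u t), -q s := by
        apply intervalIntegral.integral_nonneg h
        intro s hs
        have hs0 : 0 < s := lt_of_lt_of_le hv hs.1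
        have hgle : g s ≤ g (u t) :=
          hg_mono.monotoneOn hs0 (Set.mem_Ioi.2 hut) hs.2
        have hdiv : g ustar / g (u t) ≤ g ustar / g s :=
          div_le_div_of_nonneg_left hc.le (hg_pos s hs0) hgle
        simp only [hq_def]
        linarith
      rw [intervalIntegral.integral_neg] at h0
      simp only [hF_def]
      linarith
    · have h0 : 0 ≤ ∫ s in (u t)..v, q s := by
        apply intervalIntegral.integral_nonneg h
        intro s hs
        have hs0 : 0 < s := lt_of_lt_of_le hut hs.1
        have hgle : g (u t) ≤ g s :=
          hg_mono.monotoneOn (Set.mem_Ioi.2 hut) hs0 hs.1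
        have hdiv : g ustar / g s ≤ g ustar / g (u t) :=
          div_le_div_of_nonneg_left hc.le hgut hgle
        simp only [hq_def]
        linarith
      simp only [hF_def]
      rw [intervalIntegral.integral_symm]
      linarith
  -- the derivative of u
  set u' : ℝ → ℝ := fun x => derivWithin u (Set.Ici t₀) x with hu'_def
  have hu'_cont : ContinuousOn u' (Set.Ici t₀) :=
    hu.continuousOn_derivWithin (uniqueDiffOn_Ici t₀) le_rfl
  have hu_deriv : ∀ x : ℝ, t₀ < x → HasDerivAt u (u' x) x := by
    intro x hx
    have hdiff : DifferentiableAt ℝ u x :=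
      ((hu.differentiableOn one_ne_zero) x (le_of_lt hx)).differentiableAt (Ici_mem_nhds hx)
    have heq : u' x = deriv u x := derivWithin_of_mem_nhds (Ici_mem_nhds hx)
    rw [heq]
    exact hdiff.hasDerivAt
  -- derivative of Ψ
  have hPsi_deriv : ∀ v : ℝ, 0 < v →
      HasDerivAt (fun y => PsiFun g ustar y) (1 - g ustar / g v) v := by
    intro v hv
    have hint : IntervalIntegrable (fun s => g ustar / g s) MeasureTheory.volume ustar v := by
      apply ((continuousOn_const.div hgc hgne).mono ?_).intervalIntegrable
      intro x hx
      exact lt_of_lt_of_le (lt_min hustar hv) hx.1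
    have hd : HasDerivAt (fun y => ∫ s in ustar..y, g ustar / g s) (g ustar / g v) v :=
      intervalIntegral.integral_hasDerivAt_right hint
        ((continuousOn_const.div hgc hgne).stronglyMeasurableAtFilter isOpen_Ioi v hv)
        ((continuousOn_const.div hgc hgne).continuousAt (Ioi_mem_nhds hv))
    have hmain : HasDerivAt (fun y : ℝ => y - ustar - ∫ s in ustar..y, g ustar / g s)
        (1 - g ustar / g v) v := by
      exact ((hasDerivAt_id' v).sub_const ustar).sub hd
    simpa only [PsiFun] using hmain
  have hcomp : ∀ x : ℝ, t₀ < x →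
      HasDerivAt (fun y => PsiFun g ustar (u y)) ((1 - g ustar / g (u x)) * u' x) x := by
    intro x hx
    exact (hPsi_deriv (u x) (hu_pos x (le_of_lt hx))).comp x (hu_deriv x hx)
  -- continuity facts on [t₀, t]
  have hIcc_sub : Set.Icc t₀ t ⊆ Set.Ici t₀ := Set.Icc_subset_Ici_self
  have hu_contIcc : ContinuousOn u (Set.Icc t₀ t) := (hu.continuousOn).mono hIcc_sub
  have hmaps : Set.MapsTo u (Set.Icc t₀ t) (Set.Ioi 0) := fun x hx => hu_pos x hx.1
  have hu'_contIcc : ContinuousOn u' (Set.Icc t₀ t) := hu'_cont.mono hIcc_sub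
  have hqu_cont : ContinuousOn (fun x => q (u x)) (Set.Icc t₀ t) :=
    hq_cont.comp hu_contIcc hmaps
  have hFu_cont : ContinuousOn (fun x => F (u x)) (Set.Icc t₀ t) :=
    hF_cont.comp hu_contIcc hmaps
  have hGu_cont : ContinuousOn (fun x => 1 - g ustar / g (u x)) (Set.Icc t₀ t) :=
    continuousOn_const.sub (continuousOn_const.div (hgc.comp hu_contIcc hmaps)
      (fun x hx => hgne (u x) (hmaps hx)))
  -- integrability of the three integrands
  have hint1 : IntervalIntegrable (fun x => ((1 - g ustar / g (u x)) * u' x) * E x)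
      MeasureTheory.volume t₀ t := by
    apply ContinuousOn.intervalIntegrable
    rw [Set.uIcc_of_le ht]
    exact ((hGu_cont.mul hu'_contIcc).mul hE_cont.continuousOn)
  have hint2 : IntervalIntegrable (fun x => u' x * E x) MeasureTheory.volume t₀ t := by
    apply ContinuousOn.intervalIntegrable
    rw [Set.uIcc_of_le ht]
    exact hu'_contIcc.mul hE_cont.continuousOn
  have hint3 : IntervalIntegrable (fun x => (-(q (u x)) * u' x) * E x)
      MeasureTheory.volume t₀ t := by
    apply ContinuousOn.intervalIntegrable
    rw [Set.uIcc_of_le ht]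
    exact ((hqu_cont.neg.mul hu'_contIcc).mul hE_cont.continuousOn)
  have hint4 : IntervalIntegrable (fun x => F (u x) * (lam * E x))
      MeasureTheory.volume t₀ t := by
    apply ContinuousOn.intervalIntegrable
    rw [Set.uIcc_of_le ht]
    exact hFu_cont.mul (continuousOn_const.mul hE_cont.continuousOn)
  -- the key inequality, via integration by parts (FTC on w = F(u x) * E x)
  have key : 0 ≤ ∫ x in t₀..t, (-(q (u x)) * u' x) * E x := by
    set w : ℝ → ℝ := fun x => F (u x) * E x with hw_def
    have hw_cont : ContinuousOn w (Set.Icc t₀ t) := hFu_cont.mul hE_cont.continuousOn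
    have hw_deriv : ∀ x ∈ Set.Ioo t₀ t,
        HasDerivWithinAt w ((-(q (u x)) * u' x) * E x + F (u x) * (lam * E x)) (Set.Ioi x) x := by
      intro x hx
      have hFu : HasDerivAt (fun y => F (u y)) (-(q (u x)) * u' x) x :=
        (hF_deriv (u x) (hu_pos x hx.1.le)).comp x (hu_deriv x hx.1)
      exact (hFu.mul (hE_deriv x)).hasDerivWithinAt
    have hφ_int : IntervalIntegrable
        (fun x => (-(q (u x)) * u' x) * E x + F (u x) * (lam * E x))
        MeasureTheory.volume t₀ t := hint3.add hint4
    have hftc : (∫ x in t₀..t, ((-(q (u x)) * u' x) * E x + F (u x) * (lam * E x)))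
        = w t - w t₀ :=
      intervalIntegral.integral_eq_sub_of_hasDeriv_right_of_le ht hw_cont hw_deriv hφ_int
    have hwt : w t = 0 := by
      simp only [hw_def, hF_ut, zero_mul]
    have hwt0 : w t₀ ≤ 0 :=
      mul_nonpos_of_nonpos_of_nonneg (hF_nonpos (u t₀) (hu_pos t₀ Set.self_mem_Ici)) (hE_pos t₀).le
    have hsecond : (∫ x in t₀..t, F (u x) * (lam * E x)) ≤ 0 := by
      have h0 : 0 ≤ ∫ x in t₀..t, -(F (u x) * (lam * E x)) := by
        apply intervalIntegral.integral_nonneg ht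
        intro x hx
        have hF0 : F (u x) ≤ 0 := hF_nonpos (u x) (hu_pos x hx.1)
        have hE0 : 0 ≤ lam * E x := le_of_lt (mul_pos hlam (hE_pos x))
        nlinarith
      rw [intervalIntegral.integral_neg] at h0
      linarith
    have hsplit : (∫ x in t₀..t, ((-(q (u x)) * u' x) * E x + F (u x) * (lam * E x)))
        = (∫ x in t₀..t, (-(q (u x)) * u' x) * E x) + ∫ x in t₀..t, F (u x) * (lam * E x) :=
      intervalIntegral.integral_add hint3 hint4
    rw [hsplit] at hftc
    have : (∫ x in t₀..t, (-(q (u x)) * u' x) * E x) = w t - w t₀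
        - ∫ x in t₀..t, F (u x) * (lam * E x) := by linarith
    rw [this, hwt]
    linarith
  -- rewrite both cfDeriv integrals using the explicit derivatives
  have hI1 : (∫ x in t₀..t, deriv (fun y => PsiFun g ustar (u y)) x * E x)
      = ∫ x in t₀..t, ((1 - g ustar / g (u x)) * u' x) * E x := by
    apply intervalIntegral.integral_congr_ae
    filter_upwards with x hx
    rw [Set.uIoc_of_le ht] at hx
    rw [(hcomp x hx.1).deriv]
  have hI2 : (∫ x in t₀..t, deriv u x * E x) = ∫ x in t₀..t, u' x * E x := by
    apply intervalIntegral.integral_congr_ae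
    filter_upwards with x hx
    rw [Set.uIoc_of_le ht] at hx
    rw [(hu_deriv x hx.1).deriv]
  -- put everything together
  simp only [cfDeriv]
  simp only [show ∀ x : ℝ, Real.exp (-(α / (1 - α)) * (t - x)) = E x from fun _ => rfl]
  rw [hI1, hI2]
  have hRHS : (1 - g ustar / g (u t))
        * ((B * (2 - α) / (2 * (1 - α))) * ∫ x in t₀..t, u' x * E x)
      = (B * (2 - α) / (2 * (1 - α)))
        * ∫ x in t₀..t, (1 - g ustar / g (u t)) * (u' x * E x) := by
    rw [intervalIntegral.integral_const_mul]
    ring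
  rw [hRHS]
  apply mul_le_mul_of_nonneg_left _ hK
  rw [← sub_nonneg, ← intervalIntegral.integral_sub (by
      apply ContinuousOn.intervalIntegrable
      rw [Set.uIcc_of_le ht]
      exact continuousOn_const.mul (hu'_contIcc.mul hE_cont.continuousOn)) hint1]
  have heq : ∀ x : ℝ, (1 - g ustar / g (u t)) * (u' x * E x)
      - ((1 - g ustar / g (u x)) * u' x) * E x = (-(q (u x)) * u' x) * E x := by
    intro x
    simp only [hq_def]
    ring
  simp only [heq]
  exact key
end

section
/- Let 0 < α < 1, t₀ ∈ ℝ, let u : [t₀, ∞) → (0,∞) be continuously differentiable, let g : (0,∞) → ℝ be positive, differentiable, and strictly increasing, let u* > 0, and define Ψ(u) = u − u* − ∫_{u*}^{u} g(u*)/g(s) ds. Then for every t ≥ t₀, the Caputo fractional derivative satisfies ᶜD^α_{t₀}(Ψ∘u)(t) ≤ (1 − g(u*)/g(u(t))) · ᶜD^α_{t₀}u(t). -/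
/-- The Caputo fractional derivative of order `α` with base point `t₀`:
`ᶜD^α_{t₀}f(t) = (1/Γ(1−α)) ∫_{t₀}^{t} f'(x) (t−x)^{−α} dx`. -/
noncomputable def caputoDeriv (α t₀ : ℝ) (f : ℝ → ℝ) (t : ℝ) : ℝ :=
  (1 / Real.Gamma (1 - α)) * ∫ x in t₀..t, deriv f x * (t - x) ^ (-α)

open MeasureTheory intervalIntegral Set Filter Topology

/-- For `0 < α < 1`, a positive continuously differentiable function `u` on `[t₀,∞)`,
and `g` positive, differentiable and strictly increasing on `(0,∞)`, `u* > 0`,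
the Caputo fractional derivative satisfies
`ᶜD^α_{t₀}(Ψ∘u)(t) ≤ (1 − g(u*)/g(u(t))) ᶜD^α_{t₀}u(t)` for all `t ≥ t₀`. -/
theorem caputo_psi_estimate (α t₀ : ℝ) (hα : 0 < α) (hα1 : α < 1)
    (u : ℝ → ℝ) (hu_pos : ∀ x ∈ Set.Ici t₀, 0 < u x)
    (hu : ContDiffOn ℝ 1 u (Set.Ici t₀))
    (g : ℝ → ℝ)
    (hg_pos : ∀ s ∈ Set.Ioi (0 : ℝ), 0 < g s)
    (hg_diff : DifferentiableOn ℝ g (Set.Ioi 0))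
    (hg_mono : StrictMonoOn g (Set.Ioi 0))
    (ustar : ℝ) (hustar : 0 < ustar) :
    ∀ t : ℝ, t₀ ≤ t →
      caputoDeriv α t₀ (fun x => PsiFun g ustar (u x)) t ≤
        (1 - g ustar / g (u t)) * caputoDeriv α t₀ u t := by
  intro t ht'
  rcases ht'.eq_or_lt with rfl | ht
  · simp [caputoDeriv]
  -- basic positivity
  have hΓ : 0 < 1 / Real.Gamma (1 - α) :=
    one_div_pos.mpr (Real.Gamma_pos_of_pos (by linarith))
  have hut_pos : 0 < u t := hu_pos t (le_of_lt ht)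
  have hgut_pos : 0 < g (u t) := hg_pos _ hut_pos
  -- continuity facts
  have hgc : ContinuousOn g (Set.Ioi 0) := hg_diff.continuousOn
  have hq_cont : ContinuousOn (fun s => g ustar / g s) (Set.Ioi 0) :=
    continuousOn_const.div hgc (fun s hs => (hg_pos s hs).ne')
  have hu_c : ContinuousOn u (Set.Ici t₀) := hu.continuousOn
  set v : ℝ → ℝ := derivWithin u (Set.Ici t₀) with hv_def
  have hv_c : ContinuousOn v (Set.Ici t₀) :=
    hu.continuousOn_derivWithin (uniqueDiffOn_Ici t₀) le_rfl
  have hud : ∀ x ∈ Set.Ioi t₀, HasDerivAt u (deriv u x) x := by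
    intro x hx
    exact ((hu.differentiableOn one_ne_zero).differentiableAt (Ici_mem_nhds hx)).hasDerivAt
  have hvd : Set.EqOn (deriv u) v (Set.Ioi t₀) := by
    intro x hx
    exact (derivWithin_of_mem_nhds (Ici_mem_nhds hx)).symm
  have hdu_c : ContinuousOn (deriv u) (Set.Ioi t₀) :=
    (hv_c.mono Ioi_subset_Ici_self).congr hvd
  have hKI : Set.Icc t₀ t ⊆ Set.Ici t₀ := Set.Icc_subset_Ici_self
  -- bound on the derivative
  obtain ⟨L, hL⟩ := isCompact_Icc.exists_bound_of_continuousOn (hv_c.mono hKI)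
  have hL0 : 0 ≤ L := le_trans (norm_nonneg _) (hL t₀ ⟨le_rfl, ht.le⟩)
  -- bounds on the image of u
  obtain ⟨xm, hxm, hmin⟩ :=
    isCompact_Icc.exists_isMinOn (Set.nonempty_Icc.mpr ht.le) (hu_c.mono hKI)
  obtain ⟨xM, hxM, hmax⟩ :=
    isCompact_Icc.exists_isMaxOn (Set.nonempty_Icc.mpr ht.le) (hu_c.mono hKI)
  set m := u xm
  set M := u xM
  have hm0 : 0 < m := hu_pos xm (hKI hxm)
  have himg : ∀ x ∈ Set.Icc t₀ t, u x ∈ Set.Icc m M := fun x hx => ⟨hmin hx, hmax hx⟩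
  have hmM : Set.Icc m M ⊆ Set.Ioi (0:ℝ) := fun y hy => lt_of_lt_of_le hm0 hy.1
  -- the function p
  set p : ℝ → ℝ := fun y => g ustar / g (u t) - g ustar / g y with hp_def
  have hp_cont : ContinuousOn p (Set.Ioi 0) := continuousOn_const.sub hq_cont
  obtain ⟨Mp, hMp⟩ := isCompact_Icc.exists_bound_of_continuousOn (hp_cont.mono hmM)
  have hMp0 : 0 ≤ Mp :=
    le_trans (norm_nonneg _) (hMp (u t) (himg t ⟨ht.le, le_rfl⟩))
  have hp_nonneg : ∀ s, 0 < s → u t ≤ s → 0 ≤ p s := by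
    intro s hs hts
    have hgs : g (u t) ≤ g s := hg_mono.monotoneOn hut_pos hs hts
    have : g ustar / g s ≤ g ustar / g (u t) :=
      div_le_div_of_nonneg_left (hg_pos _ hustar).le hgut_pos hgs
    simpa [hp_def] using sub_nonneg.mpr this
  have hp_nonpos : ∀ s, 0 < s → s ≤ u t → p s ≤ 0 := by
    intro s hs hts
    have hgs : g s ≤ g (u t) := hg_mono.monotoneOn hs hut_pos hts
    have : g ustar / g (u t) ≤ g ustar / g s :=
      div_le_div_of_nonneg_left (hg_pos _ hustar).le (hg_pos s hs) hgs
    simpa [hp_def] using sub_nonpos.mpr this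
  -- the function Φ and F
  set Φ : ℝ → ℝ := fun y => ∫ s in (u t)..y, p s with hΦ_def
  have hΦ_nonneg : ∀ y, 0 < y → 0 ≤ Φ y := by
    intro y hy
    rcases le_total (u t) y with h | h
    · exact intervalIntegral.integral_nonneg h
        (fun s hs => hp_nonneg s (lt_of_lt_of_le hut_pos hs.1) hs.1)
    · have h1 : (0:ℝ) ≤ ∫ s in y..(u t), -p s :=
        intervalIntegral.integral_nonneg h
          (fun s hs => neg_nonneg.mpr (hp_nonpos s (lt_of_lt_of_le hy hs.1) hs.2))
      rw [intervalIntegral.integral_neg] at h1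
      have h2 : Φ y = -∫ s in y..(u t), p s := intervalIntegral.integral_symm y (u t)
      linarith
  have huIcc_pos : ∀ y : ℝ, 0 < y → Set.uIcc (u t) y ⊆ Set.Ioi (0:ℝ) := by
    intro y hy s hs
    have := hs.1
    have h0 : (0:ℝ) < min (u t) y := lt_min hut_pos hy
    exact lt_of_lt_of_le h0 (by simpa using this)
  have hΦd : ∀ y, 0 < y → HasDerivAt Φ (p y) y := by
    intro y hy
    refine intervalIntegral.integral_hasDerivAt_right
      ((hp_cont.mono (huIcc_pos y hy)).intervalIntegrable)
      (hp_cont.stronglyMeasurableAtFilter isOpen_Ioi y hy)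
      (hp_cont.continuousAt (Ioi_mem_nhds hy))
  set F : ℝ → ℝ := fun x => Φ (u x) with hF_def
  have hFd : ∀ x ∈ Set.Ioi t₀, HasDerivAt F (p (u x) * deriv u x) x := by
    intro x hx
    exact (hΦd (u x) (hu_pos x (Set.mem_Ici.mpr (le_of_lt hx)))).comp x (hud x hx)
  have hF_nonneg : ∀ x ∈ Set.Ici t₀, 0 ≤ F x := fun x hx => hΦ_nonneg _ (hu_pos x hx)
  have hFt : F t = 0 := by simp [hF_def, hΦ_def]
  -- the weight w and its properties
  set w : ℝ → ℝ := fun x => (t - x) ^ (-α) with hw_def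
  have hw_nonneg : ∀ x ≤ t, 0 ≤ w x := fun x hx => Real.rpow_nonneg (by linarith) _
  have hw_anti : ∀ a b : ℝ, 0 < a → a ≤ b → b ^ (-α) ≤ a ^ (-α) := by
    intro a b ha hab
    rw [Real.rpow_neg (by linarith), Real.rpow_neg ha.le]
    exact inv_anti₀ (Real.rpow_pos_of_pos ha α) (Real.rpow_le_rpow ha.le hab hα.le)
  have hw_int : IntervalIntegrable w volume t₀ t := by
    have h1 : IntervalIntegrable (fun x : ℝ => x ^ (-α)) volume 0 (t - t₀) :=
      intervalIntegral.intervalIntegrable_rpow' (by linarith)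
    have h2 := (h1.comp_sub_left t).symm
    simpa [hw_def] using h2
  have hw_aesm : ∀ a b : ℝ, Set.uIoc a b ⊆ Set.Ioc t₀ t →
      AEStronglyMeasurable w (volume.restrict (Set.uIoc a b)) := by
    intro a b hsub
    exact hw_int.aestronglyMeasurable.mono_measure (Measure.restrict_mono hsub le_rfl)
  -- continuity of p ∘ u on Icc t₀ t
  have hpu_c : ContinuousOn (fun x => p (u x)) (Set.Icc t₀ t) :=
    hp_cont.comp (hu_c.mono hKI) (fun x hx => lt_of_lt_of_le hm0 (himg x hx).1)
  -- measurability helper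
  have hG_aesm : ∀ a b : ℝ, Set.uIoc a b ⊆ Set.Ioc t₀ t →
      AEStronglyMeasurable (fun x => p (u x) * deriv u x * w x)
        (volume.restrict (Set.uIoc a b)) := by
    intro a b hsub
    have h1 : AEStronglyMeasurable (fun x => p (u x)) (volume.restrict (Set.uIoc a b)) :=
      (hpu_c.aestronglyMeasurable measurableSet_Icc).mono_measure
        (Measure.restrict_mono (hsub.trans Set.Ioc_subset_Icc_self) le_rfl)
    exact (h1.mul (measurable_deriv u).aestronglyMeasurable).mul (hw_aesm a b hsub)
  have hD_aesm : ∀ a b : ℝ, Set.uIoc a b ⊆ Set.Ioc t₀ t →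
      AEStronglyMeasurable (fun x => deriv u x * w x)
      (volume.restrict (Set.uIoc a b)) := by
    intro a b hsub
    exact (measurable_deriv u).aestronglyMeasurable.mul (hw_aesm a b hsub)
  -- bound on deriv u on Ioc t₀ t
  have hderiv_bound : ∀ x ∈ Set.Ioc t₀ t, ‖deriv u x‖ ≤ L := by
    intro x hx
    rw [hvd hx.1]
    exact hL x ⟨hx.1.le, hx.2⟩
  have hpu_bound : ∀ x ∈ Set.Ioc t₀ t, ‖p (u x)‖ ≤ Mp := fun x hx =>
    hMp (u x) (himg x ⟨hx.1.le, hx.2⟩)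
  -- interval integrability of D and G on t₀..t
  have hD_int : IntervalIntegrable (fun x => deriv u x * w x) volume t₀ t := by
    refine ((hw_int.const_mul L).mono_fun (hD_aesm t₀ t (by rw [Set.uIoc_of_le ht.le])) ?_)
    rw [Set.uIoc_of_le ht.le]
    refine (ae_restrict_iff' measurableSet_Ioc).mpr (Filter.Eventually.of_forall ?_)
    intro x hx
    have hwx : 0 ≤ w x := hw_nonneg x hx.2
    calc ‖deriv u x * w x‖ = ‖deriv u x‖ * w x := by
          rw [norm_mul, Real.norm_of_nonneg hwx]
      _ ≤ L * w x := mul_le_mul_of_nonneg_right (hderiv_bound x hx) hwx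
      _ ≤ ‖L * w x‖ := le_abs_self _
  have hG_int : IntervalIntegrable (fun x => p (u x) * deriv u x * w x) volume t₀ t := by
    refine ((hw_int.const_mul (Mp * L)).mono_fun
      (hG_aesm t₀ t (by rw [Set.uIoc_of_le ht.le])) ?_)
    rw [Set.uIoc_of_le ht.le]
    refine (ae_restrict_iff' measurableSet_Ioc).mpr (Filter.Eventually.of_forall ?_)
    intro x hx
    have hwx : 0 ≤ w x := hw_nonneg x hx.2
    calc ‖p (u x) * deriv u x * w x‖ = ‖p (u x)‖ * ‖deriv u x‖ * w x := by
          rw [norm_mul, norm_mul, Real.norm_of_nonneg hwx]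
      _ ≤ Mp * L * w x := by
          refine mul_le_mul_of_nonneg_right ?_ hwx
          exact mul_le_mul (hpu_bound x hx) (hderiv_bound x hx) (norm_nonneg _) hMp0
      _ ≤ ‖Mp * L * w x‖ := le_abs_self _
  -- MVT bound for u
  have hMVT : ∀ s ∈ Set.Icc t₀ t, ‖u s - u t‖ ≤ L * ‖s - t‖ := by
    intro s hs
    refine (convex_Icc t₀ t).norm_image_sub_le_of_norm_hasDerivWithin_le
      (f' := v) (fun x hx => ?_) (fun x hx => hL x hx) ⟨ht.le, le_rfl⟩ hs
    exact ((hu.differentiableOn one_ne_zero) x (hKI hx)).hasDerivWithinAt.mono hKI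
  -- derivative of w
  have hw_d : ∀ x ∈ Set.Iio t, HasDerivAt w (α * (t - x) ^ (-α - 1)) x := by
    intro x hx
    have hx' : x < t := hx
    have h1 : HasDerivAt (fun y : ℝ => t - y) (-1) x := (hasDerivAt_id x).const_sub t
    have h2 : HasDerivAt (fun y : ℝ => y ^ (-α)) ((-α) * (t - x) ^ (-α - 1)) (t - x) :=
      Real.hasDerivAt_rpow_const (Or.inl (by intro h; rw [sub_eq_zero] at h; exact hx'.ne' h))
    have h3 := h2.comp x h1
    have h4 : α * (t - x) ^ (-α - 1) = (-α) * (t - x) ^ (-α - 1) * (-1) := by ring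
    rw [h4]
    exact h3
  -- integration by parts step
  have hstep : ∀ s ∈ Set.Ioo t₀ t, ∀ r ∈ Set.Ioo t₀ s,
      (∫ x in r..s, p (u x) * deriv u x * w x) ≤ F s * w s := by
    intro s hs r hr
    have hrs : r ≤ s := hr.2.le
    have hIcc_sub : Set.Icc r s ⊆ Set.Ioi t₀ := fun x hx => lt_of_lt_of_le hr.1 hx.1
    have hIcc_lt : ∀ x ∈ Set.Icc r s, x < t := fun x hx => lt_of_le_of_lt hx.2 hs.2
    have hFd' : ∀ x ∈ Set.uIcc r s, HasDerivAt F (p (u x) * deriv u x) x := by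
      intro x hx; rw [Set.uIcc_of_le hrs] at hx; exact hFd x (hIcc_sub hx)
    have hwd' : ∀ x ∈ Set.uIcc r s, HasDerivAt w (α * (t - x) ^ (-α - 1)) x := by
      intro x hx; rw [Set.uIcc_of_le hrs] at hx; exact hw_d x (hIcc_lt x hx)
    have hF'_int : IntervalIntegrable (fun x => p (u x) * deriv u x) volume r s := by
      apply ContinuousOn.intervalIntegrable
      rw [Set.uIcc_of_le hrs]
      exact (hpu_c.mono (Set.Icc_subset_Icc hr.1.le hs.2.le)).mul (hdu_c.mono hIcc_sub)
    have hw'_int : IntervalIntegrable (fun x => α * (t - x) ^ (-α - 1)) volume r s := by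
      apply ContinuousOn.intervalIntegrable
      rw [Set.uIcc_of_le hrs]
      refine continuousOn_const.mul (ContinuousOn.rpow_const
        ((continuous_const.sub continuous_id).continuousOn) ?_)
      intro x hx
      exact Or.inl (ne_of_gt (sub_pos.mpr (hIcc_lt x hx)))
    have hIBP := intervalIntegral.integral_mul_deriv_eq_deriv_mul hFd' hwd' hF'_int hw'_int
    have h1 : 0 ≤ ∫ x in r..s, F x * (α * (t - x) ^ (-α - 1)) := by
      refine intervalIntegral.integral_nonneg hrs (fun x hx => mul_nonneg
        (hF_nonneg x (Set.mem_Ici.mpr (le_of_lt (hIcc_sub hx))))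
        (mul_nonneg hα.le (Real.rpow_nonneg ?_ _)))
      have := hIcc_lt x hx
      linarith
    have h2 : 0 ≤ F r * w r :=
      mul_nonneg (hF_nonneg r hr.1.le) (hw_nonneg r (hr.2.trans hs.2).le)
    linarith [hIBP.ge, hIBP.le]
  -- limit r → t₀, for fixed s
  have hmain : ∀ s ∈ Set.Ioo t₀ t,
      (∫ x in t₀..s, p (u x) * deriv u x * w x) ≤ F s * w s := by
    intro s hs
    have hG_int_s : IntervalIntegrable (fun x => p (u x) * deriv u x * w x) volume t₀ s := by
      refine hG_int.mono_set' ?_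
      rw [Set.uIoc_of_le hs.1.le, Set.uIoc_of_le ht.le]
      exact Set.Ioc_subset_Ioc le_rfl hs.2.le
    have hIOn : IntegrableOn (fun x => p (u x) * deriv u x * w x) (Set.uIcc t₀ s) volume := by
      rw [Set.uIcc_of_le hs.1.le, integrableOn_Icc_iff_integrableOn_Ioc]
      exact (intervalIntegrable_iff_integrableOn_Ioc_of_le hs.1.le).mp hG_int_s
    have hcont := intervalIntegral.continuousOn_primitive_interval_left hIOn
    have hct : ContinuousWithinAt (fun r => ∫ x in r..s, p (u x) * deriv u x * w x)
        (Set.uIcc t₀ s) t₀ := hcont t₀ left_mem_uIcc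
    have hne : (𝓝[Set.Ioo t₀ s] t₀).NeBot := by
      apply mem_closure_iff_nhdsWithin_neBot.mp
      rw [closure_Ioo (ne_of_lt hs.1)]
      exact ⟨le_rfl, hs.1.le⟩
    haveI := hne
    have hsub2 : Set.Ioo t₀ s ⊆ Set.uIcc t₀ s := by
      rw [Set.uIcc_of_le hs.1.le]; exact Set.Ioo_subset_Icc_self
    refine le_of_tendsto (x := 𝓝[Set.Ioo t₀ s] t₀)
      (hct.tendsto.mono_left (nhdsWithin_mono _ hsub2)) ?_
    filter_upwards [self_mem_nhdsWithin] with r hr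
    exact hstep s hs r hr
  -- limit s → t
  have hne_t : (𝓝[Set.Ioo t₀ t] t).NeBot := by
    apply mem_closure_iff_nhdsWithin_neBot.mp
    rw [closure_Ioo (ne_of_lt ht)]
    exact ⟨ht.le, le_rfl⟩
  have hIOn_t : IntegrableOn (fun x => p (u x) * deriv u x * w x) (Set.uIcc t₀ t) volume := by
    rw [Set.uIcc_of_le ht.le, integrableOn_Icc_iff_integrableOn_Ioc]
    exact (intervalIntegrable_iff_integrableOn_Ioc_of_le ht.le).mp hG_int
  have htend1 : Tendsto (fun s => ∫ x in t₀..s, p (u x) * deriv u x * w x)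
      (𝓝[Set.Ioo t₀ t] t) (𝓝 (∫ x in t₀..t, p (u x) * deriv u x * w x)) := by
    have hcont := intervalIntegral.continuousOn_primitive_interval hIOn_t
    have hct := hcont t right_mem_uIcc
    refine hct.tendsto.mono_left (nhdsWithin_mono _ ?_)
    rw [Set.uIcc_of_le ht.le]
    exact Set.Ioo_subset_Icc_self
  have htend2 : Tendsto (fun s => F s * w s) (𝓝[Set.Ioo t₀ t] t) (𝓝 0) := by
    have hb : ∀ s ∈ Set.Ioo t₀ t, F s * w s ≤ Mp * L * (t - s) ^ (1 - α) := by
      intro s hs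
      have hws : 0 ≤ w s := hw_nonneg s hs.2.le
      have hFb : F s ≤ Mp * (L * (t - s)) := by
        have h1 : ‖Φ (u s)‖ ≤ Mp * ‖u s - u t‖ := by
          have hsub : Set.uIcc (u t) (u s) ⊆ Set.Icc m M :=
            Set.uIcc_subset_Icc (himg t ⟨ht.le, le_rfl⟩) (himg s ⟨hs.1.le, hs.2.le⟩)
          have := intervalIntegral.norm_integral_le_of_norm_le_const
            (C := Mp) (f := p) (a := u t) (b := u s)
            (fun y hy => hMp y (hsub (Set.uIoc_subset_uIcc hy)))
          simpa [Real.norm_eq_abs, abs_sub_comm (u s) (u t)] using this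
        have h2 : ‖u s - u t‖ ≤ L * (t - s) := by
          have h3 := hMVT s ⟨hs.1.le, hs.2.le⟩
          rwa [Real.norm_eq_abs (s - t), abs_sub_comm, abs_of_nonneg (by linarith [hs.2])] at h3
        calc F s ≤ ‖Φ (u s)‖ := le_abs_self _
          _ ≤ Mp * ‖u s - u t‖ := h1
          _ ≤ Mp * (L * (t - s)) := mul_le_mul_of_nonneg_left h2 hMp0
      calc F s * w s ≤ Mp * (L * (t - s)) * w s := mul_le_mul_of_nonneg_right hFb hws
        _ = Mp * L * ((t - s) * (t - s) ^ (-α)) := by rw [hw_def]; ring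
        _ = Mp * L * (t - s) ^ (1 - α) := by
            rw [show (1 : ℝ) - α = 1 + (-α) by ring,
              Real.rpow_add (show (0:ℝ) < t - s by linarith [hs.2]), Real.rpow_one]
    have hb0 : ∀ s ∈ Set.Ioo t₀ t, 0 ≤ F s * w s := fun s hs =>
      mul_nonneg (hF_nonneg s hs.1.le) (hw_nonneg s hs.2.le)
    have htb : Tendsto (fun s => Mp * L * (t - s) ^ (1 - α)) (𝓝[Set.Ioo t₀ t] t) (𝓝 0) := by
      have h1 : Tendsto (fun s : ℝ => t - s) (𝓝[Set.Ioo t₀ t] t) (𝓝 0) := by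
        have hc : Continuous (fun s : ℝ => t - s) := continuous_const.sub continuous_id
        have := (hc.tendsto t).mono_left (nhdsWithin_le_nhds (s := Set.Ioo t₀ t))
        simpa using this
      have h2 : Tendsto (fun y : ℝ => y ^ (1 - α)) (𝓝 0) (𝓝 0) := by
        have hc := Real.continuousAt_rpow_const 0 (1 - α) (Or.inr (by linarith))
        have h0 : (0:ℝ) ^ (1 - α) = 0 := Real.zero_rpow (by linarith)
        rw [ContinuousAt, h0] at hc
        exact hc
      have h3 := (h2.comp h1).const_mul (Mp * L)
      simpa using h3
    exact tendsto_of_tendsto_of_tendsto_of_le_of_le'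
      tendsto_const_nhds htb (eventually_nhdsWithin_of_forall hb0)
      (eventually_nhdsWithin_of_forall hb)
  have hkey : (∫ x in t₀..t, p (u x) * deriv u x * w x) ≤ 0 :=
    le_of_tendsto_of_tendsto htend1 htend2 (eventually_nhdsWithin_of_forall hmain)
  -- derivative of Ψ ∘ u
  have hPsiD : ∀ x ∈ Set.Ioi t₀, deriv (fun y => PsiFun g ustar (u y)) x
      = (1 - g ustar / g (u x)) * deriv u x := by
    intro x hx
    have hx0 : 0 < u x := hu_pos x (Set.mem_Ici.mpr (le_of_lt hx))
    have hqd : HasDerivAt (fun y => ∫ s in ustar..y, g ustar / g s) (g ustar / g (u x)) (u x) := by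
      refine intervalIntegral.integral_hasDerivAt_right
        ((hq_cont.mono ?_).intervalIntegrable)
        (hq_cont.stronglyMeasurableAtFilter isOpen_Ioi _ hx0)
        (hq_cont.continuousAt (Ioi_mem_nhds hx0))
      intro y hy
      have h0 : (0:ℝ) < min ustar (u x) := lt_min hustar hx0
      exact lt_of_lt_of_le h0 (by simpa using hy.1)
    have hΨd : HasDerivAt (fun y => PsiFun g ustar y) (1 - g ustar / g (u x)) (u x) := by
      have h1 := ((hasDerivAt_id (u x)).sub_const ustar).sub hqd
      exact h1
    exact (hΨd.comp x (hud x hx)).deriv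
  -- assembling the integrals
  have hIeq : (∫ x in t₀..t, deriv (fun y => PsiFun g ustar (u y)) x * w x)
      = (∫ x in t₀..t, p (u x) * deriv u x * w x)
        + (1 - g ustar / g (u t)) * ∫ x in t₀..t, deriv u x * w x := by
    rw [← intervalIntegral.integral_const_mul,
      ← intervalIntegral.integral_add hG_int (hD_int.const_mul _)]
    apply intervalIntegral.integral_congr_ae
    filter_upwards with x hx
    rw [Set.uIoc_of_le ht.le] at hx
    rw [hPsiD x hx.1]
    simp only [hp_def]
    ring
  have hcap1 : caputoDeriv α t₀ (fun x => PsiFun g ustar (u x)) t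
      = (1 / Real.Gamma (1 - α)) *
        ∫ x in t₀..t, deriv (fun y => PsiFun g ustar (u y)) x * w x := by
    simp only [caputoDeriv, hw_def]
  have hcap2 : caputoDeriv α t₀ u t
      = (1 / Real.Gamma (1 - α)) * ∫ x in t₀..t, deriv u x * w x := by
    simp only [caputoDeriv, hw_def]
  rw [hcap1, hcap2, hIeq]
  have h1 : (1 / Real.Gamma (1 - α)) * (∫ x in t₀..t, p (u x) * deriv u x * w x)
      ≤ (1 / Real.Gamma (1 - α)) * 0 := mul_le_mul_of_nonneg_left hkey hΓ.le
  nlinarith [h1]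
end

section
/- Let 0 < α < 1, B(α) > 0, t₀ ∈ ℝ, let u : [t₀, ∞) → (0,∞) be continuously differentiable, and let u* > 0. Then for every t ≥ t₀, the Caputo–Fabrizio fractional derivative of the Volterra-type function satisfies ᶜᶠD^α_{t₀}[ u(·) − u* − u* ln(u(·)/u*) ](t) ≤ (1 − u*/u(t)) · ᶜᶠD^α_{t₀}u(t). -/
/-- For `0 < α < 1`, `B(α) > 0`, a positive continuously differentiable function `u` on
`[t₀,∞)` and `u* > 0`, the Caputo–Fabrizio fractional derivative of the Volterra-type
function satisfies
`ᶜᶠD^α_{t₀}[u − u* − u* ln(u/u*)](t) ≤ (1 − u*/u(t)) ᶜᶠD^α_{t₀}u(t)` for all `t ≥ t₀`. -/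
theorem cf_volterra_estimate (α B t₀ : ℝ) (hα : 0 < α) (hα1 : α < 1) (hB : 0 < B)
    (u : ℝ → ℝ) (hu_pos : ∀ x ∈ Set.Ici t₀, 0 < u x)
    (hu : ContDiffOn ℝ 1 u (Set.Ici t₀))
    (ustar : ℝ) (hustar : 0 < ustar) :
    ∀ t : ℝ, t₀ ≤ t →
      cfDeriv B α t₀ (fun x => u x - ustar - ustar * Real.log (u x / ustar)) t ≤
        (1 - ustar / u t) * cfDeriv B α t₀ u t := by
  intro t ht
  rcases eq_or_lt_of_le ht with rfl | htlt
  · simp [cfDeriv]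
  have h1α : (0:ℝ) < 1 - α := by linarith
  have hut : 0 < u t := hu_pos t (le_of_lt htlt)
  have hk : 0 < α / (1 - α) := div_pos hα h1α
  simp only [cfDeriv]
  set k : ℝ := α / (1 - α) with hk_def
  set C : ℝ := B * (2 - α) / (2 * (1 - α)) with hC_def
  have hC : 0 < C := div_pos (mul_pos hB (by linarith)) (by linarith)
  set g : ℝ → ℝ := fun x => Real.exp (-k * (t - x)) with hg_def
  have hgpos : ∀ x, 0 < g x := fun x => Real.exp_pos _
  set f' : ℝ → ℝ := fun x => derivWithin u (Set.Ici t₀) x with hf'_def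
  have hudiff : DifferentiableOn ℝ u (Set.Ici t₀) := hu.differentiableOn one_ne_zero
  have hud : ∀ x ∈ Set.Ioi t₀, HasDerivAt u (f' x) x := by
    intro x hx
    have hmem : Set.Ici t₀ ∈ nhds x := Ici_mem_nhds hx
    have hd : DifferentiableAt ℝ u x :=
      (hudiff x (Set.mem_Ici.mpr (le_of_lt hx))).differentiableAt hmem
    have he : f' x = deriv u x := derivWithin_of_mem_nhds hmem
    rw [hf'_def]  -- keep as is
    rw [← hf'_def, he]
    exact hd.hasDerivAt
  have hf'cont : ContinuousOn f' (Set.Ici t₀) :=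
    hu.continuousOn_derivWithin (uniqueDiffOn_Ici t₀) le_rfl
  -- derivative of g
  have hgd : ∀ x : ℝ, HasDerivAt g (k * g x) x := by
    intro x
    have h1 : HasDerivAt (fun y : ℝ => t - y) (-1) x := (hasDerivAt_id x).const_sub t
    have h2 := (h1.const_mul (-k)).exp
    convert h2 using 1
    ring
  -- rewrite the LHS integrand
  have hint1 : (∫ x in t₀..t,
        deriv (fun x => u x - ustar - ustar * Real.log (u x / ustar)) x * g x)
      = ∫ x in t₀..t, (f' x * (1 - ustar / u x)) * g x := by
    apply intervalIntegral.integral_congr_ae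
    filter_upwards with x hx
    rw [Set.uIoc_of_le ht] at hx
    have hx1 : x ∈ Set.Ioi t₀ := hx.1
    have hux : 0 < u x := hu_pos x (le_of_lt hx.1)
    have hne : u x / ustar ≠ 0 := by positivity
    have h2 := ((hud x hx1).div_const ustar).log hne
    have hV : HasDerivAt (fun x => u x - ustar - ustar * Real.log (u x / ustar))
        (f' x - ustar * (f' x / ustar / (u x / ustar))) x :=
      ((hud x hx1).sub_const ustar).sub (h2.const_mul ustar)
    rw [hV.deriv]
    have h3 : f' x - ustar * (f' x / ustar / (u x / ustar)) = f' x * (1 - ustar / u x) := by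
      field_simp
    rw [h3]
  have hint2 : (∫ x in t₀..t, deriv u x * g x) = ∫ x in t₀..t, f' x * g x := by
    apply intervalIntegral.integral_congr_ae
    filter_upwards with x hx
    rw [Set.uIoc_of_le ht] at hx
    rw [(hud x hx.1).deriv]
  rw [hint1, hint2]
  -- continuity facts on [t₀, t]
  have hIcc : Set.uIcc t₀ t = Set.Icc t₀ t := Set.uIcc_of_le ht
  have hsub : Set.Icc t₀ t ⊆ Set.Ici t₀ := Set.Icc_subset_Ici_self
  have hucont : ContinuousOn u (Set.Icc t₀ t) := hu.continuousOn.mono hsub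
  have hf'c : ContinuousOn f' (Set.Icc t₀ t) := hf'cont.mono hsub
  have hgc : ContinuousOn g (Set.Icc t₀ t) := by fun_prop
  have hune : ∀ x ∈ Set.Icc t₀ t, u x ≠ 0 := fun x hx => (hu_pos x (hsub hx)).ne'
  set φ : ℝ → ℝ := fun x => f' x * (ustar / u t - ustar / u x) * g x with hφ_def
  have hφc : ContinuousOn φ (Set.Icc t₀ t) :=
    (hf'c.mul (continuousOn_const.sub (continuousOn_const.div hucont hune))).mul hgc
  have hφint : IntervalIntegrable φ MeasureTheory.volume t₀ t :=
    ContinuousOn.intervalIntegrable (by rw [hIcc]; exact hφc)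
  have hf'gint : IntervalIntegrable (fun x => f' x * g x) MeasureTheory.volume t₀ t :=
    ContinuousOn.intervalIntegrable (by rw [hIcc]; exact hf'c.mul hgc)
  -- split the first integral
  have hA : (∫ x in t₀..t, (f' x * (1 - ustar / u x)) * g x)
      = (∫ x in t₀..t, φ x) + (1 - ustar / u t) * ∫ x in t₀..t, f' x * g x := by
    rw [← intervalIntegral.integral_const_mul,
      ← intervalIntegral.integral_add hφint (hf'gint.const_mul _)]
    apply intervalIntegral.integral_congr
    intro x hx
    simp only [hφ_def]
    ring
  rw [hA]
  -- the auxiliary nonnegative function h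
  set h : ℝ → ℝ := fun x => ustar * (u x / u t - 1 - Real.log (u x / u t)) with hh_def
  have hhnn : ∀ x ∈ Set.Icc t₀ t, 0 ≤ h x := by
    intro x hx
    have hux : 0 < u x := hu_pos x (hsub hx)
    have := Real.log_le_sub_one_of_pos (div_pos hux hut)
    simp only [hh_def]
    nlinarith
  have hht : h t = 0 := by
    simp [hh_def, div_self hut.ne']
  have hhc : ContinuousOn h (Set.Icc t₀ t) := by
    have hne : ∀ x ∈ Set.Icc t₀ t, u x / u t ≠ 0 := by
      intro x hx
      have := hu_pos x (hsub hx)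
      positivity
    exact (((hucont.div_const (u t)).sub continuousOn_const).sub
      ((hucont.div_const (u t)).log hne)).const_smul ustar
  -- derivative of h * g on the open interval
  have hFd : ∀ x ∈ Set.Ioo t₀ t,
      HasDerivWithinAt (fun y => h y * g y) (φ x + h x * (k * g x)) (Set.Ioi x) x := by
    intro x hx
    have hx1 : x ∈ Set.Ioi t₀ := hx.1
    have hux : 0 < u x := hu_pos x (le_of_lt hx.1)
    have hne : u x / u t ≠ 0 := by positivity
    have h1 := (hud x hx1).div_const (u t)
    have h2 := h1.log hne
    have hhd : HasDerivAt h (ustar * (f' x / u t - f' x / u t / (u x / u t))) x :=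
      ((h1.sub_const 1).sub h2).const_mul ustar
    have h4 := hhd.mul (hgd x)
    have h5 : ustar * (f' x / u t - f' x / u t / (u x / u t)) * g x + h x * (k * g x)
        = φ x + h x * (k * g x) := by
      simp only [hφ_def]
      have h6 : ustar * (f' x / u t - f' x / u t / (u x / u t))
          = f' x * (ustar / u t - ustar / u x) := by
        field_simp
      rw [h6]
    rw [← h5]
    exact h4.hasDerivWithinAt
  have hFcont : ContinuousOn (fun y => h y * g y) (Set.Icc t₀ t) := hhc.mul hgc
  have hF'c : ContinuousOn (fun x => φ x + h x * (k * g x)) (Set.Icc t₀ t) :=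
    hφc.add (hhc.mul (hgc.const_smul k))
  have hF'int : IntervalIntegrable (fun x => φ x + h x * (k * g x))
      MeasureTheory.volume t₀ t :=
    ContinuousOn.intervalIntegrable (by rw [hIcc]; exact hF'c)
  have hFTC : (∫ x in t₀..t, (φ x + h x * (k * g x)))
      = h t * g t - h t₀ * g t₀ :=
    intervalIntegral.integral_eq_sub_of_hasDeriv_right_of_le ht hFcont hFd hF'int
  have hkgint : IntervalIntegrable (fun x => h x * (k * g x)) MeasureTheory.volume t₀ t :=
    ContinuousOn.intervalIntegrable (by rw [hIcc]; exact hhc.mul (hgc.const_smul k))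
  have hsplit : (∫ x in t₀..t, (φ x + h x * (k * g x)))
      = (∫ x in t₀..t, φ x) + ∫ x in t₀..t, h x * (k * g x) :=
    intervalIntegral.integral_add hφint hkgint
  have hkgnn : 0 ≤ ∫ x in t₀..t, h x * (k * g x) := by
    apply intervalIntegral.integral_nonneg ht
    intro x hx
    exact mul_nonneg (hhnn x hx) (mul_nonneg hk.le (hgpos x).le)
  have hht0 : 0 ≤ h t₀ * g t₀ :=
    mul_nonneg (hhnn t₀ (Set.left_mem_Icc.mpr ht)) (hgpos t₀).le
  have key : (∫ x in t₀..t, φ x) ≤ 0 := by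
    have := hFTC
    rw [hsplit, hht] at this
    linarith
  have h5 : C * (∫ x in t₀..t, φ x) ≤ 0 := mul_nonpos_of_nonneg_of_nonpos hC.le key
  calc C * ((∫ x in t₀..t, φ x) + (1 - ustar / u t) * ∫ x in t₀..t, f' x * g x)
      = C * (∫ x in t₀..t, φ x)
        + (1 - ustar / u t) * (C * ∫ x in t₀..t, f' x * g x) := by ring
    _ ≤ (1 - ustar / u t) * (C * ∫ x in t₀..t, f' x * g x) := by linarith
end

section
/- Let 0 < α < 1, t₀ ∈ ℝ, let u : [t₀, ∞) → (0,∞) be continuously differentiable, and let u* > 0. Then for every t ≥ t₀, the Caputo fractional derivative of the Volterra-type function satisfies ᶜD^α_{t₀}[ u(·) − u* − u* ln(u(·)/u*) ](t) ≤ (1 − u*/u(t)) · ᶜD^α_{t₀}u(t). -/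
open Set intervalIntegral MeasureTheory

lemma phi_intervalIntegrable {α t : ℝ} (hα1 : α < 1) (a b : ℝ) :
    IntervalIntegrable (fun x => (t - x) ^ (-α)) volume a b := by
  have h : IntervalIntegrable (fun y : ℝ => y ^ (-α)) volume (t - a) (t - b) :=
    intervalIntegrable_rpow' (by linarith)
  have := h.comp_sub_left t
  simpa using this

lemma key_integral_nonpos (α t₀ t : ℝ) (hα : 0 < α) (hα1 : α < 1) (htt : t₀ < t)
    (h w : ℝ → ℝ) (hh_cont : ContinuousOn h (Icc t₀ t))
    (hh_nonneg : ∀ x ∈ Icc t₀ t, 0 ≤ h x) (hht : h t = 0)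
    (hw_cont : ContinuousOn w (Icc t₀ t))
    (hderiv : ∀ x ∈ Ioo t₀ t, HasDerivAt h (w x) x) :
    (∫ x in t₀..t, w x * (t - x) ^ (-α)) ≤ 0 := by
  obtain ⟨M, hM⟩ := (isCompact_Icc.exists_bound_of_continuousOn hw_cont)
  have hM0 : 0 ≤ M := le_trans (norm_nonneg _) (hM t₀ (left_mem_Icc.2 htt.le))
  set C : ℝ := M + M / (1 - α) with hC
  have hC0 : 0 ≤ C := by
    have : 0 ≤ M / (1 - α) := div_nonneg hM0 (by linarith)
    simp [hC]; linarith
  -- the main estimate for each ε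
  have main : ∀ ε ∈ Ioo (0 : ℝ) (t - t₀),
      (∫ x in t₀..t, w x * (t - x) ^ (-α)) ≤ C * ε ^ (1 - α) := by
    intro ε hε
    obtain ⟨hε0, hεt⟩ := hε
    set s : ℝ := t - ε with hs
    have hts : t₀ < s := by simp [hs]; linarith
    have hst : s < t := by simp [hs]; linarith
    have huIcc1 : uIcc t₀ s = Icc t₀ s := uIcc_of_le hts.le
    have huIcc2 : uIcc s t = Icc s t := uIcc_of_le hst.le
    have hsub1 : Icc t₀ s ⊆ Icc t₀ t := Icc_subset_Icc le_rfl hst.le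
    have hsub2 : Icc s t ⊆ Icc t₀ t := Icc_subset_Icc hts.le le_rfl
    -- integrability of w * φ on pieces
    have hwφ_int : ∀ a b, a ∈ Icc t₀ t → b ∈ Icc t₀ t →
        IntervalIntegrable (fun x => w x * (t - x) ^ (-α)) volume a b := by
      intro a b ha hb
      exact (phi_intervalIntegrable hα1 a b).continuousOn_mul
        (hw_cont.mono (uIcc_subset_Icc ha hb))
    -- split
    have hsplit : (∫ x in t₀..t, w x * (t - x) ^ (-α)) =
        (∫ x in t₀..s, w x * (t - x) ^ (-α)) + ∫ x in s..t, w x * (t - x) ^ (-α) := by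
      rw [integral_add_adjacent_intervals
        (hwφ_int t₀ s (left_mem_Icc.2 htt.le) ⟨hts.le, hst.le⟩)
        (hwφ_int s t ⟨hts.le, hst.le⟩ (right_mem_Icc.2 htt.le))]
    -- tail piece
    have htail : (∫ x in s..t, w x * (t - x) ^ (-α)) ≤ M * (ε ^ (1 - α) / (1 - α)) := by
      have hmono : (∫ x in s..t, w x * (t - x) ^ (-α)) ≤ ∫ x in s..t, M * (t - x) ^ (-α) := by
        apply integral_mono_on hst.le (hwφ_int s t ⟨hts.le, hst.le⟩ (right_mem_Icc.2 htt.le))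
          ((phi_intervalIntegrable hα1 s t).const_mul M)
        intro x hx
        have hφ0 : (0:ℝ) ≤ (t - x) ^ (-α) := Real.rpow_nonneg (by linarith [hx.2]) _
        have : w x ≤ M := le_trans (le_abs_self _) (hM x (hsub2 hx))
        exact mul_le_mul_of_nonneg_right this hφ0
      have hcomp : (∫ x in s..t, (t - x) ^ (-α)) = ∫ y in (0:ℝ)..ε, y ^ (-α) := by
        rw [integral_comp_sub_left (fun y => y ^ (-α)) t]
        norm_num [hs]
      have hval : (∫ y in (0:ℝ)..ε, y ^ (-α)) = ε ^ (1 - α) / (1 - α) := by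
        rw [integral_rpow (Or.inl (by linarith))]
        rw [Real.zero_rpow (by linarith)]
        norm_num
        ring_nf
      calc (∫ x in s..t, w x * (t - x) ^ (-α)) ≤ ∫ x in s..t, M * (t - x) ^ (-α) := hmono
        _ = M * ∫ x in s..t, (t - x) ^ (-α) := integral_const_mul _ _
        _ = M * (ε ^ (1 - α) / (1 - α)) := by rw [hcomp, hval]
    -- main piece via integration by parts (FTC)
    have hmain : (∫ x in t₀..s, w x * (t - x) ^ (-α)) ≤ M * ε ^ (1 - α) := by
      -- φ is continuous and positive on [t₀, s]
      have hbase : ∀ x ∈ Icc t₀ s, (0:ℝ) < t - x := fun x hx => by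
        have := hx.2; simp [hs] at this ⊢; linarith
      have hφc : ContinuousOn (fun x => (t - x) ^ (-α)) (Icc t₀ s) :=
        (continuousOn_const.sub continuousOn_id).rpow_const
          (fun x hx => Or.inl (ne_of_gt (hbase x hx)))
      have hψc : ContinuousOn (fun x => h x * (α * (t - x) ^ (-α - 1))) (Icc t₀ s) :=
        (hh_cont.mono hsub1).mul (continuousOn_const.mul
          ((continuousOn_const.sub continuousOn_id).rpow_const
            (fun x hx => Or.inl (ne_of_gt (hbase x hx)))))
      have hDc : ContinuousOn
          (fun x => w x * (t - x) ^ (-α) + h x * (α * (t - x) ^ (-α - 1))) (Icc t₀ s) :=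
        ((hw_cont.mono hsub1).mul hφc).add hψc
      have hPd : ∀ x ∈ Ioo t₀ s, HasDerivAt (fun x => h x * (t - x) ^ (-α))
          (w x * (t - x) ^ (-α) + h x * (α * (t - x) ^ (-α - 1))) x := by
        intro x hx
        have hx' : x ∈ Ioo t₀ t := ⟨hx.1, lt_trans hx.2 hst⟩
        have h1 : HasDerivAt h (w x) x := hderiv x hx'
        have h2 : HasDerivAt (fun x : ℝ => t - x) (-1) x := (hasDerivAt_id x).const_sub t
        have h3 : HasDerivAt (fun x => (t - x) ^ (-α))
            ((-α) * (t - x) ^ (-α - 1) * (-1)) x := by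
          have := (Real.hasDerivAt_rpow_const
            (x := t - x) (p := -α) (Or.inl (ne_of_gt (hbase x (Ioo_subset_Icc_self hx))))).comp x h2
          exact this
        have := h1.mul h3
        exact this.congr_deriv (by ring)
      have hFTC : (∫ x in t₀..s,
          (w x * (t - x) ^ (-α) + h x * (α * (t - x) ^ (-α - 1)))) =
          h s * (t - s) ^ (-α) - h t₀ * (t - t₀) ^ (-α) := by
        apply integral_eq_sub_of_hasDeriv_right_of_le hts.le
          ((hh_cont.mono hsub1).mul hφc)
          (fun x hx => (hPd x hx).hasDerivWithinAt)
        exact (hDc.mono (by rw [huIcc1])).intervalIntegrable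
      have hint1 : IntervalIntegrable (fun x => w x * (t - x) ^ (-α)) volume t₀ s :=
        (((hw_cont.mono hsub1).mul hφc).mono (by rw [huIcc1])).intervalIntegrable
      have hint2 : IntervalIntegrable (fun x => h x * (α * (t - x) ^ (-α - 1))) volume t₀ s :=
        (hψc.mono (by rw [huIcc1])).intervalIntegrable
      have hsplit2 : (∫ x in t₀..s, w x * (t - x) ^ (-α)) =
          (h s * (t - s) ^ (-α) - h t₀ * (t - t₀) ^ (-α)) -
            ∫ x in t₀..s, h x * (α * (t - x) ^ (-α - 1)) := by
        rw [← hFTC, integral_add hint1 hint2]; ring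
      have hpos1 : 0 ≤ h t₀ * (t - t₀) ^ (-α) :=
        mul_nonneg (hh_nonneg t₀ (left_mem_Icc.2 htt.le)) (Real.rpow_nonneg (by linarith) _)
      have hpos2 : 0 ≤ ∫ x in t₀..s, h x * (α * (t - x) ^ (-α - 1)) := by
        apply integral_nonneg hts.le
        intro x hx
        exact mul_nonneg (hh_nonneg x (hsub1 hx))
          (mul_nonneg hα.le (Real.rpow_nonneg (hbase x hx).le _))
      -- bound h s ≤ M * ε
      have hhs : h s ≤ M * ε := by
        have hFTC2 : (∫ x in s..t, w x) = h t - h s := by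
          apply integral_eq_sub_of_hasDeriv_right_of_le hst.le (hh_cont.mono hsub2)
            (fun x hx => (hderiv x ⟨lt_trans hts hx.1, hx.2⟩).hasDerivWithinAt)
          exact ((hw_cont.mono hsub2).mono (by rw [huIcc2])).intervalIntegrable
        have hbound : ‖∫ x in s..t, w x‖ ≤ M * |t - s| := by
          apply intervalIntegral.norm_integral_le_of_norm_le_const
          intro x hx
          rw [uIoc_of_le hst.le] at hx
          exact hM x (hsub2 (Ioc_subset_Icc_self hx))
        have : |h t - h s| ≤ M * ε := by
          rw [← Real.norm_eq_abs, ← hFTC2]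
          convert hbound using 2
          rw [abs_of_pos]; simp [hs]; simp [hs]; linarith
        rw [hht] at this
        have := (abs_le.1 this).1
        linarith
      have hεα : (t - s) ^ (-α) = ε ^ (-α) := by simp [hs]
      have hhs0 : 0 ≤ h s := hh_nonneg s ⟨hts.le, hst.le⟩
      have hεα0 : (0:ℝ) ≤ ε ^ (-α) := Real.rpow_nonneg hε0.le _
      have hfin : h s * (t - s) ^ (-α) ≤ M * ε ^ (1 - α) := by
        rw [hεα]
        calc h s * ε ^ (-α) ≤ (M * ε) * ε ^ (-α) := mul_le_mul_of_nonneg_right hhs hεα0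
          _ = M * (ε * ε ^ (-α)) := by ring
          _ = M * ε ^ (1 - α) := by
              congr 1
              rw [show (1:ℝ) - α = 1 + -α by ring, Real.rpow_add hε0, Real.rpow_one]
      rw [hsplit2]
      linarith
    rw [hsplit]
    have : M * (ε ^ (1 - α) / (1 - α)) = (M / (1 - α)) * ε ^ (1 - α) := by ring
    rw [this] at htail
    rw [hC]
    nlinarith [htail, hmain]
  -- take the limit ε → 0⁺
  have hlim : Filter.Tendsto (fun ε : ℝ => C * ε ^ (1 - α)) (nhdsWithin 0 (Ioi 0)) (nhds 0) := by
    have hcont : ContinuousAt (fun ε : ℝ => ε ^ (1 - α)) 0 :=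
      Real.continuousAt_rpow_const 0 (1 - α) (Or.inr (by linarith))
    have h0 : (0:ℝ) ^ (1 - α) = 0 := Real.zero_rpow (by linarith)
    have : Filter.Tendsto (fun ε : ℝ => C * ε ^ (1 - α)) (nhdsWithin 0 (Ioi 0)) (nhds (C * (0:ℝ) ^ (1-α))) :=
      (hcont.tendsto.mono_left nhdsWithin_le_nhds).const_mul C
    rw [h0, mul_zero] at this
    exact this
  have hev : ∀ᶠ ε in nhdsWithin (0:ℝ) (Ioi 0),
      (∫ x in t₀..t, w x * (t - x) ^ (-α)) ≤ C * ε ^ (1 - α) := by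
    filter_upwards [Ioo_mem_nhdsGT_of_mem (show (0:ℝ) ∈ Ico (0:ℝ) (t - t₀) from ⟨le_refl 0, by linarith⟩)] with ε hε
    exact main ε hε
  exact ge_of_tendsto hlim hev

/-- For `0 < α < 1`, a positive continuously differentiable function `u` on `[t₀,∞)` and
`u* > 0`, the Caputo fractional derivative of the Volterra-type function satisfies
`ᶜD^α_{t₀}[u − u* − u* ln(u/u*)](t) ≤ (1 − u*/u(t)) ᶜD^α_{t₀}u(t)` for all `t ≥ t₀`. -/
theorem caputo_volterra_estimate (α t₀ : ℝ) (hα : 0 < α) (hα1 : α < 1)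
    (u : ℝ → ℝ) (hu_pos : ∀ x ∈ Set.Ici t₀, 0 < u x)
    (hu : ContDiffOn ℝ 1 u (Set.Ici t₀))
    (ustar : ℝ) (hustar : 0 < ustar) :
    ∀ t : ℝ, t₀ ≤ t →
      caputoDeriv α t₀ (fun x => u x - ustar - ustar * Real.log (u x / ustar)) t ≤
        (1 - ustar / u t) * caputoDeriv α t₀ u t := by
  intro t ht
  rcases eq_or_lt_of_le ht with heq | htt
  · subst heq
    simp [caputoDeriv, intervalIntegral.integral_same]
  -- setup
  set g : ℝ → ℝ := fun x => derivWithin u (Set.Ici t₀) x with hg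
  have hgc : ContinuousOn g (Set.Ici t₀) :=
    hu.continuousOn_derivWithin (uniqueDiffOn_Ici t₀) le_rfl
  have hud : ∀ x ∈ Set.Ioi t₀, HasDerivAt u (g x) x := by
    intro x hx
    exact ((hu.differentiableOn one_ne_zero x (Ioi_subset_Ici_self hx)).hasDerivWithinAt).hasDerivAt
      (Ici_mem_nhds hx)
  have hut : 0 < u t := hu_pos t ht
  have hc : (0:ℝ) < 1 / Real.Gamma (1 - α) := by
    have : 0 < Real.Gamma (1 - α) := Real.Gamma_pos_of_pos (by linarith)
    positivity
  have hIccsub : Icc t₀ t ⊆ Ici t₀ := Icc_subset_Ici_self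
  have huc : ContinuousOn u (Icc t₀ t) := hu.continuousOn.mono hIccsub
  have hgcI : ContinuousOn g (Icc t₀ t) := hgc.mono hIccsub
  have hune : ∀ x ∈ Icc t₀ t, u x ≠ 0 := fun x hx => ne_of_gt (hu_pos x (hIccsub hx))
  -- the Volterra function and its derivative
  have hVd : ∀ x ∈ Set.Ioi t₀,
      HasDerivAt (fun x => u x - ustar - ustar * Real.log (u x / ustar))
        (g x * (1 - ustar / u x)) x := by
    intro x hx
    have hux : 0 < u x := hu_pos x (Ioi_subset_Ici_self hx)
    have h1 : HasDerivAt (fun x => u x / ustar) (g x / ustar) x := (hud x hx).div_const ustar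
    have h2 : HasDerivAt (fun x => Real.log (u x / ustar))
        ((g x / ustar) / (u x / ustar)) x :=
      h1.log (by positivity)
    have h3 := ((hud x hx).sub_const ustar).sub (h2.const_mul ustar)
    refine h3.congr_deriv ?_
    field_simp
  -- rewrite the two caputo integrals
  have hφint : IntervalIntegrable (fun x => (t - x) ^ (-α)) volume t₀ t :=
    phi_intervalIntegrable hα1 t₀ t
  have huIcc : uIcc t₀ t = Icc t₀ t := uIcc_of_le ht
  have hA_int : IntervalIntegrable (fun x => (g x * (1 - ustar / u x)) * (t - x) ^ (-α))
      volume t₀ t := by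
    apply hφint.continuousOn_mul
    rw [huIcc]
    exact hgcI.mul (continuousOn_const.sub (continuousOn_const.div huc hune))
  have hB_int : IntervalIntegrable (fun x => g x * (t - x) ^ (-α)) volume t₀ t := by
    apply hφint.continuousOn_mul
    rw [huIcc]
    exact hgcI
  have hIocIoi : ∀ x ∈ Set.uIoc t₀ t, x ∈ Set.Ioi t₀ := by
    intro x hx
    rw [uIoc_of_le ht] at hx
    exact hx.1
  have hLHS : (∫ x in t₀..t,
      deriv (fun x => u x - ustar - ustar * Real.log (u x / ustar)) x * (t - x) ^ (-α)) =
      ∫ x in t₀..t, (g x * (1 - ustar / u x)) * (t - x) ^ (-α) := by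
    apply intervalIntegral.integral_congr_ae
    apply Filter.Eventually.of_forall
    intro x hx
    rw [(hVd x (hIocIoi x hx)).deriv]
  have hRHS : (∫ x in t₀..t, deriv u x * (t - x) ^ (-α)) =
      ∫ x in t₀..t, g x * (t - x) ^ (-α) := by
    apply intervalIntegral.integral_congr_ae
    apply Filter.Eventually.of_forall
    intro x hx
    rw [(hud x (hIocIoi x hx)).deriv]
  -- the key inequality
  have hkey : (∫ x in t₀..t, (g x / u t - g x / u x) * (t - x) ^ (-α)) ≤ 0 := by
    apply key_integral_nonpos α t₀ t hα hα1 htt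
      (fun x => u x / u t - 1 - Real.log (u x / u t))
      (fun x => g x / u t - g x / u x)
    · exact ((huc.div_const _).sub continuousOn_const).sub
        ((huc.div_const _).log (fun x hx => by
          have := hu_pos x (hIccsub hx); positivity))
    · intro x hx
      have hux : 0 < u x := hu_pos x (hIccsub hx)
      have h1 : 0 < u x / u t := by positivity
      have := Real.log_le_sub_one_of_pos h1
      linarith
    · simp [div_self (ne_of_gt hut)]
    · exact (hgcI.div_const _).sub (hgcI.div huc hune)
    · intro x hx
      have hx' : x ∈ Set.Ioi t₀ := hx.1
      have hux : 0 < u x := hu_pos x (Ioi_subset_Ici_self hx')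
      have h1 : HasDerivAt (fun x => u x / u t) (g x / u t) x := (hud x hx').div_const (u t)
      have h2 : HasDerivAt (fun x => Real.log (u x / u t))
          ((g x / u t) / (u x / u t)) x := h1.log (by positivity)
      have h3 := (h1.sub_const 1).sub h2
      refine h3.congr_deriv ?_
      field_simp
  -- put everything together
  unfold caputoDeriv
  rw [hLHS, hRHS]
  rw [show (1 - ustar / u t) * ((1 / Real.Gamma (1 - α)) * ∫ x in t₀..t, g x * (t - x) ^ (-α))
      = (1 / Real.Gamma (1 - α)) * ((1 - ustar / u t) * ∫ x in t₀..t, g x * (t - x) ^ (-α))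
      from by ring]
  apply mul_le_mul_of_nonneg_left _ hc.le
  rw [← intervalIntegral.integral_const_mul]
  have hdiff : (∫ x in t₀..t, (g x * (1 - ustar / u x)) * (t - x) ^ (-α)) -
      (∫ x in t₀..t, (1 - ustar / u t) * (g x * (t - x) ^ (-α))) =
      ∫ x in t₀..t, ustar * ((g x / u t - g x / u x) * (t - x) ^ (-α)) := by
    rw [← intervalIntegral.integral_sub hA_int (hB_int.const_mul _)]
    apply intervalIntegral.integral_congr_ae
    apply Filter.Eventually.of_forall
    intro x hx
    have hx' := hIocIoi x hx
    have hux : u x ≠ 0 := ne_of_gt (hu_pos x (Ioi_subset_Ici_self hx'))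
    field_simp
    ring
  have : (∫ x in t₀..t, ustar * ((g x / u t - g x / u x) * (t - x) ^ (-α))) ≤ 0 := by
    rw [intervalIntegral.integral_const_mul]
    exact mul_nonpos_of_nonneg_of_nonpos hustar.le hkey
  linarith [hdiff, this]
end

section
/- Let 0 < α < 1, B(α) > 0, t₀ ∈ ℝ, and let u : [t₀, ∞) → ℝ be continuously differentiable. Then for every t ≥ t₀, the Caputo–Fabrizio fractional derivative satisfies ᶜᶠD^α_{t₀}(u²)(t) ≤ 2 u(t) · ᶜᶠD^α_{t₀}u(t). -/
open MeasureTheory Set intervalIntegral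

/-- For `0 < α < 1`, `B(α) > 0` and a continuously differentiable function `u` on `[t₀,∞)`,
the Caputo–Fabrizio fractional derivative satisfies
`ᶜᶠD^α_{t₀}(u²)(t) ≤ 2u(t) ᶜᶠD^α_{t₀}u(t)` for all `t ≥ t₀`. -/
theorem cf_sq_estimate (α B t₀ : ℝ) (hα : 0 < α) (hα1 : α < 1) (hB : 0 < B)
    (u : ℝ → ℝ) (hu : ContDiffOn ℝ 1 u (Set.Ici t₀)) :
    ∀ t : ℝ, t₀ ≤ t →
      cfDeriv B α t₀ (fun x => u x ^ 2) t ≤ 2 * u t * cfDeriv B α t₀ u t := by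
  intro t ht
  have h1α : (0:ℝ) < 1 - α := by linarith
  set L : ℝ := α / (1 - α) with hLdef
  have hL : 0 ≤ L := by positivity
  set E : ℝ → ℝ := fun x => Real.exp (-(α / (1 - α)) * (t - x)) with hEdef
  have hEpos : ∀ x, 0 < E x := fun x => Real.exp_pos _
  have hEcont : Continuous E := by
    apply Real.continuous_exp.comp
    continuity
  have hEderiv : ∀ x : ℝ, HasDerivAt E (L * E x) x := by
    intro x
    have h := (((hasDerivAt_const x t).sub (hasDerivAt_id x)).const_mul (-L)).exp
    convert h using 1
    · funext y; simp only [hEdef, hLdef, Pi.sub_apply, id_eq]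
    simp only [hEdef, hLdef, Pi.sub_apply, id_eq]
    ring
  set v : ℝ → ℝ := derivWithin u (Ici t₀) with hvdef
  have hvc : ContinuousOn v (Ici t₀) :=
    hu.continuousOn_derivWithin (uniqueDiffOn_Ici t₀) le_rfl
  have huc : ContinuousOn u (Ici t₀) := hu.continuousOn
  have hud : ∀ x ∈ Ioi t₀, HasDerivAt u (v x) x := fun x hx =>
    ((hu.differentiableOn one_ne_zero x (mem_Ici.mpr (le_of_lt hx))).hasDerivWithinAt).hasDerivAt
      (Ici_mem_nhds hx)
  set f : ℝ → ℝ := fun x => 2 * (u x - u t) * v x * E x with hfdef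
  set g : ℝ → ℝ := fun x => (u x - u t) ^ 2 * E x with hgdef
  set F : ℝ → ℝ := fun x => (u x - u t) ^ 2 * E x with hFdef
  -- integrability
  have hfc : ContinuousOn f (Icc t₀ t) := by
    exact ((continuousOn_const.mul ((huc.mono Icc_subset_Ici_self).sub
      continuousOn_const)).mul (hvc.mono Icc_subset_Ici_self)).mul hEcont.continuousOn
  have hgc : ContinuousOn g (Icc t₀ t) := by
    apply ContinuousOn.mul _ (hEcont.continuousOn)
    exact ((huc.mono Icc_subset_Ici_self).sub continuousOn_const).pow 2
  have hf_int : IntervalIntegrable f volume t₀ t :=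
    (hfc.mono (by rw [uIcc_of_le ht])).intervalIntegrable
  have hg_int : IntervalIntegrable g volume t₀ t :=
    (hgc.mono (by rw [uIcc_of_le ht])).intervalIntegrable
  have hvE_int : IntervalIntegrable (fun x => v x * E x) volume t₀ t := by
    apply ContinuousOn.intervalIntegrable
    rw [uIcc_of_le ht]
    exact (hvc.mono Icc_subset_Ici_self).mul hEcont.continuousOn
  -- FTC / integration by parts
  have hFd : ∀ x ∈ Ioo t₀ t, HasDerivAt F (f x + L * g x) x := by
    intro x hx
    have h1 : HasDerivAt (fun y => (u y - u t) ^ 2) (2 * (u x - u t) ^ 1 * v x) x := by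
      have := ((hud x hx.1).sub_const (u t)).fun_pow 2
      simpa using this
    have h2 := h1.mul (hEderiv x)
    convert h2 using 1
    · rfl
    · rfl
    · rfl
    simp only [hfdef, hgdef]
    ring
  have hcontF : ContinuousOn F (Icc t₀ t) := hgc
  have hFTC : ∫ x in t₀..t, (f x + L * g x) = F t - F t₀ := by
    apply integral_eq_sub_of_hasDeriv_right_of_le ht hcontF
      (fun x hx => (hFd x hx).hasDerivWithinAt)
    exact hf_int.add (hg_int.const_mul L)
  have hsplit : ∫ x in t₀..t, (f x + L * g x) =
      (∫ x in t₀..t, f x) + L * ∫ x in t₀..t, g x := by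
    rw [integral_add hf_int (hg_int.const_mul L), intervalIntegral.integral_const_mul]
  have hgnn : 0 ≤ ∫ x in t₀..t, g x := by
    apply intervalIntegral.integral_nonneg ht
    intro x _
    have := (hEpos x).le
    positivity
  have hFt : F t = 0 := by simp [hFdef]
  have hFt0 : 0 ≤ F t₀ := by
    have := (hEpos t₀).le
    simp only [hFdef]
    positivity
  have hkey : (∫ x in t₀..t, f x) ≤ 0 := by
    have := hFTC
    rw [hsplit] at this
    nlinarith [mul_nonneg hL hgnn]
  -- rewrite the two integrals
  have hA : (∫ x in t₀..t, deriv (fun y => u y ^ 2) x * E x)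
      = ∫ x in t₀..t, (f x + 2 * u t * (v x * E x)) := by
    apply intervalIntegral.integral_congr_ae
    apply MeasureTheory.ae_of_all
    intro x hx
    rw [Set.uIoc_of_le ht] at hx
    have hd : deriv (fun y => u y ^ 2) x = 2 * u x * v x := by
      have h1 : HasDerivAt (fun y => u y ^ 2) (2 * u x ^ 1 * v x) x :=
        (hud x hx.1).fun_pow 2
      simpa using h1.deriv
    rw [hd]; simp only [hfdef]; ring
  have hB2 : (∫ x in t₀..t, deriv u x * E x) = ∫ x in t₀..t, v x * E x := by
    apply intervalIntegral.integral_congr_ae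
    apply MeasureTheory.ae_of_all
    intro x hx
    rw [Set.uIoc_of_le ht] at hx
    rw [(hud x hx.1).deriv]
  have hAsplit : (∫ x in t₀..t, (f x + 2 * u t * (v x * E x)))
      = (∫ x in t₀..t, f x) + 2 * u t * ∫ x in t₀..t, v x * E x := by
    rw [integral_add hf_int (hvE_int.const_mul (2 * u t)), intervalIntegral.integral_const_mul]
  -- conclude
  unfold cfDeriv
  rw [hA, hB2, hAsplit]
  have hC : 0 < B * (2 - α) / (2 * (1 - α)) :=
    div_pos (mul_pos hB (by linarith)) (by linarith)
  set I := ∫ x in t₀..t, v x * E x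
  set J := ∫ x in t₀..t, f x
  nlinarith [mul_nonpos_of_nonneg_of_nonpos hC.le hkey]
end

section
/- Let 0 < α < 1, t₀ ∈ ℝ, and let u : [t₀, ∞) → ℝ be continuously differentiable. Then for every t ≥ t₀, the Caputo fractional derivative satisfies ᶜD^α_{t₀}(u²)(t) ≤ 2 u(t) · ᶜD^α_{t₀}u(t). -/
open Set MeasureTheory intervalIntegral Filter Real

-- Key positivity lemma: 0 ≤ ∫_{t₀}^t 2(u t − u x) u'(x) (t−x)^{−α}
theorem caputo_key (α t₀ t : ℝ) (hα : 0 < α) (hα1 : α < 1) (ht : t₀ < t)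
    (u : ℝ → ℝ) (hu : ContDiffOn ℝ 1 u (Set.Ici t₀)) :
    0 ≤ ∫ x in t₀..t,
      2 * (u t - u x) * derivWithin u (Set.Ici t₀) x * (t - x) ^ (-α) := by
  set φ := derivWithin u (Set.Ici t₀) with hφ
  have hφc : ContinuousOn φ (Set.Ici t₀) :=
    hu.continuousOn_derivWithin (uniqueDiffOn_Ici t₀) le_rfl
  have huc : ContinuousOn u (Set.Ici t₀) := hu.continuousOn
  have hud : ∀ x, t₀ < x → HasDerivAt u (φ x) x := by
    intro x hx
    have hd : DifferentiableAt ℝ u x :=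
      ((hu.differentiableOn one_ne_zero) x hx.le).differentiableAt (Ici_mem_nhds hx)
    have : φ x = deriv u x := derivWithin_of_mem_nhds (Ici_mem_nhds hx)
    rw [this]; exact hd.hasDerivAt
  -- integrability of the weight
  have hw_int : ∀ s ∈ Set.Icc t₀ t,
      IntervalIntegrable (fun x => (t - x) ^ (-α)) volume t₀ s := by
    intro s hs
    have h0 : IntervalIntegrable (fun y : ℝ => y ^ (-α)) volume (t - t₀) 0 :=
      intervalIntegrable_rpow' (by linarith)
    have h1 := h0.comp_sub_left t
    simp only [sub_sub_cancel, sub_zero] at h1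
    exact h1.mono_set (by
      rw [Set.uIcc_of_le hs.1, Set.uIcc_of_le ht.le]
      exact Set.Icc_subset_Icc le_rfl hs.2)
  -- integrability of (cont on Icc t₀ t) * weight
  have hmul_int : ∀ (g : ℝ → ℝ), ContinuousOn g (Set.Icc t₀ t) →
      IntervalIntegrable (fun x => g x * (t - x) ^ (-α)) volume t₀ t := by
    intro g hg
    exact (hw_int t ⟨ht.le, le_rfl⟩ |>.continuousOn_mul
      (by rwa [Set.uIcc_of_le ht.le]))
  -- Lipschitz bound on [t₀, t]
  obtain ⟨K, hK⟩ : ∃ K, ∀ x ∈ Set.Icc t₀ t, ‖derivWithin u (Set.Icc t₀ t) x‖ ≤ K := by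
    have hc : ContinuousOn (fun x => ‖derivWithin u (Set.Icc t₀ t) x‖) (Set.Icc t₀ t) :=
      ((hu.mono (Set.Icc_subset_Ici_self)).continuousOn_derivWithin
        (uniqueDiffOn_Icc ht) le_rfl).norm
    obtain ⟨K, hK⟩ := isCompact_Icc.exists_bound_of_continuousOn hc
    exact ⟨K, fun x hx => by simpa using hK x hx⟩
  have hK0 : 0 ≤ K := le_trans (norm_nonneg _) (hK t₀ ⟨le_rfl, ht.le⟩)
  have hlip : ∀ s ∈ Set.Icc t₀ t, |u t - u s| ≤ K * (t - s) := by
    intro s hs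
    have h := Convex.norm_image_sub_le_of_norm_derivWithin_le
      (hu.differentiableOn one_ne_zero |>.mono Set.Icc_subset_Ici_self) hK
      (convex_Icc t₀ t) hs ⟨ht.le, le_rfl⟩
    rw [Real.norm_eq_abs, Real.norm_eq_abs] at h
    calc |u t - u s| ≤ K * |t - s| := h
    _ = K * (t - s) := by rw [abs_of_nonneg (by linarith [hs.2])]
  set F : ℝ → ℝ := fun x => 2 * (u t - u x) * φ x * (t - x) ^ (-α) with hF
  have hFint : IntervalIntegrable F volume t₀ t := by
    apply hmul_int
    exact (continuousOn_const.mul (continuousOn_const.sub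
      (huc.mono Set.Icc_subset_Ici_self))).mul (hφc.mono Set.Icc_subset_Ici_self)
  -- the partial integrals
  set I : ℝ → ℝ := fun s => ∫ x in t₀..s, F x with hI
  -- lower bound for I s when s ∈ Ioo t₀ t, via integration by parts
  have hIbnd : ∀ s ∈ Set.Ioo t₀ t, -(K ^ 2 * (t - s) ^ (2 - α)) ≤ I s := by
    intro s hs
    obtain ⟨hs1, hs2⟩ := hs
    set G : ℝ → ℝ := fun x => -((u t - u x) ^ 2) with hG
    set w : ℝ → ℝ := fun x => (t - x) ^ (-α) with hw
    set G' : ℝ → ℝ := fun x => 2 * (u t - u x) * φ x with hG'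
    set w' : ℝ → ℝ := fun x => α * (t - x) ^ (-α - 1) with hw'
    have hIccs : Set.uIcc t₀ s = Set.Icc t₀ s := Set.uIcc_of_le hs1.le
    have hposb : ∀ x ∈ Set.Icc t₀ s, 0 < t - x := fun x hx => by
      have := hx.2; linarith
    have hucs : ContinuousOn u (Set.Icc t₀ s) := huc.mono Set.Icc_subset_Ici_self
    have hφcs : ContinuousOn φ (Set.Icc t₀ s) := hφc.mono Set.Icc_subset_Ici_self
    have hGc : ContinuousOn G (Set.Icc t₀ s) :=
      ((continuousOn_const.sub hucs).pow 2).neg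
    have hwc : ContinuousOn w (Set.Icc t₀ s) :=
      ContinuousOn.rpow_const ((continuous_const.sub continuous_id).continuousOn)
        (fun x hx => Or.inl (ne_of_gt (hposb x hx)))
    have hw'c : ContinuousOn w' (Set.Icc t₀ s) :=
      continuousOn_const.mul
        (ContinuousOn.rpow_const ((continuous_const.sub continuous_id).continuousOn)
          (fun x hx => Or.inl (ne_of_gt (hposb x hx))))
    have hG'c : ContinuousOn G' (Set.Icc t₀ s) :=
      (continuousOn_const.mul (continuousOn_const.sub hucs)).mul hφcs
    have hGd : ∀ x ∈ Set.Ioo t₀ s, HasDerivAt G (G' x) x := by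
      intro x hx
      have h1 : HasDerivAt (fun y => u t - u y) (-(φ x)) x :=
        (hud x hx.1).const_sub (u t)
      have h2 := (h1.pow 2).neg
      convert h2 using 1
      · rfl
      · rfl
      · rfl
      · simp [hG']
    have hwd : ∀ x ∈ Set.Ioo t₀ s, HasDerivAt w (w' x) x := by
      intro x hx
      have h0 : 0 < t - x := by have := hx.2; linarith
      have h1 : HasDerivAt (fun y : ℝ => t - y) (-1) x := by
        simpa using (hasDerivAt_id x).const_sub t
      have h2 := h1.rpow_const (p := -α) (Or.inl (ne_of_gt h0))
      convert h2 using 1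
      simp [hw']
    have hG'w_int : IntervalIntegrable (fun x => G' x * w x) volume t₀ s :=
      ((hG'c.mul hwc).mono (le_of_eq hIccs)).intervalIntegrable
    have hGw'_int : IntervalIntegrable (fun x => G x * w' x) volume t₀ s :=
      ((hGc.mul hw'c).mono (le_of_eq hIccs)).intervalIntegrable
    have hG'int : IntervalIntegrable G' volume t₀ s :=
      (hG'c.mono (le_of_eq hIccs)).intervalIntegrable
    have hw'int : IntervalIntegrable w' volume t₀ s :=
      (hw'c.mono (le_of_eq hIccs)).intervalIntegrable
    have hParts : ∫ x in t₀..s, (G' x * w x + G x * w' x)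
        = G s * w s - G t₀ * w t₀ := by
      apply integral_deriv_mul_eq_sub_of_hasDeriv_right
      · rw [hIccs]; exact hGc
      · rw [hIccs]; exact hwc
      · rw [min_eq_left hs1.le, max_eq_right hs1.le]
        exact fun x hx => (hGd x hx).hasDerivWithinAt
      · rw [min_eq_left hs1.le, max_eq_right hs1.le]
        exact fun x hx => (hwd x hx).hasDerivWithinAt
      · exact hG'int
      · exact hw'int
    have hsplit : (∫ x in t₀..s, (G' x * w x + G x * w' x))
        = (∫ x in t₀..s, G' x * w x) + ∫ x in t₀..s, G x * w' x :=
      integral_add hG'w_int hGw'_int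
    have hIs : I s = ∫ x in t₀..s, G' x * w x := by
      simp only [hI, hF, hG', hw]
    have hb1 : (∫ x in t₀..s, G x * w' x) ≤ 0 := by
      have h := intervalIntegral.integral_nonneg (μ := volume) hs1.le
        (f := fun x => -(G x * w' x)) (fun x hx => by
          have h0 : 0 ≤ t - x := (hposb x hx).le
          have : 0 ≤ (-(G x)) * w' x := by
            apply mul_nonneg
            · simp [hG]; positivity
            · simp only [hw']
              exact mul_nonneg hα.le (Real.rpow_nonneg h0 _)
          simpa [neg_mul] using this)
      rw [intervalIntegral.integral_neg] at h
      linarith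
    have hb2 : G t₀ * w t₀ ≤ 0 := by
      apply mul_nonpos_of_nonpos_of_nonneg
      · simp [hG]; positivity
      · exact Real.rpow_nonneg (hposb t₀ ⟨le_rfl, hs1.le⟩).le _
    have hb3 : -(K ^ 2 * (t - s) ^ (2 - α)) ≤ G s * w s := by
      have hts : 0 < t - s := by linarith
      have habs : |u t - u s| ≤ K * (t - s) := hlip s ⟨hs1.le, hs2.le⟩
      have hsq : (u t - u s) ^ 2 ≤ (K * (t - s)) ^ 2 := by
        nlinarith [sq_abs (u t - u s), abs_nonneg (u t - u s),
          mul_self_le_mul_self (abs_nonneg (u t - u s)) habs]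
      have h2 : (u t - u s) ^ 2 * (t - s) ^ (-α)
          ≤ (K * (t - s)) ^ 2 * (t - s) ^ (-α) :=
        mul_le_mul_of_nonneg_right hsq (Real.rpow_nonneg hts.le _)
      have hrw : (t - s) ^ (2 : ℕ) * (t - s) ^ (-α) = (t - s) ^ (2 - α) := by
        rw [← Real.rpow_natCast (t - s) 2, ← Real.rpow_add hts]
        congr 1
      have h3 : (K * (t - s)) ^ 2 * (t - s) ^ (-α) = K ^ 2 * (t - s) ^ (2 - α) := by
        rw [mul_pow, mul_assoc, hrw]
      have h4 : G s * w s = -((u t - u s) ^ 2 * (t - s) ^ (-α)) := by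
        simp [hG, hw]
      rw [h4]
      linarith
    rw [hIs]
    have : (∫ x in t₀..s, G' x * w x)
        = G s * w s - G t₀ * w t₀ - ∫ x in t₀..s, G x * w' x := by
      rw [← hParts, hsplit]; ring
    rw [this]
    linarith
  -- continuity of I at t from the left
  have hItend : Tendsto I (nhdsWithin t (Set.Ioo t₀ t)) (nhds (I t)) := by
    have hconI : ContinuousOn I (Set.uIcc t₀ t) :=
      continuousOn_primitive_interval' hFint Set.left_mem_uIcc
    have := hconI t (Set.right_mem_uIcc)
    exact this.mono_left (nhdsWithin_mono t
      (by rw [Set.uIcc_of_le ht.le]; exact Set.Ioo_subset_Icc_self))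
  have hne : (nhdsWithin t (Set.Ioo t₀ t)).NeBot := right_nhdsWithin_Ioo_neBot ht
  -- the minorant tends to 0
  have hmtend : Tendsto (fun s => -(K ^ 2 * (t - s) ^ (2 - α)))
      (nhdsWithin t (Set.Ioo t₀ t)) (nhds 0) := by
    have h1 : Tendsto (fun s : ℝ => t - s) (nhds t) (nhds 0) := by
      have : Continuous (fun s : ℝ => t - s) := continuous_const.sub continuous_id
      simpa using this.tendsto t
    have h2 : Tendsto (fun y : ℝ => y ^ (2 - α)) (nhds 0) (nhds 0) := by
      have := (Real.continuousAt_rpow_const 0 (2 - α) (Or.inr (by linarith))).tendsto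
      rwa [Real.zero_rpow (by linarith : (2:ℝ) - α ≠ 0)] at this
    have h3 := (h2.comp h1).const_mul (K ^ 2)
    have h4 := h3.neg
    simp only [mul_zero, neg_zero] at h4
    exact (h4.mono_left nhdsWithin_le_nhds)
  have : 0 ≤ I t := by
    have := le_of_tendsto_of_tendsto hmtend hItend
      (eventually_nhdsWithin_of_forall (fun s hs => hIbnd s hs))
    simpa using this
  exact this

/-- For `0 < α < 1` and a continuously differentiable function `u` on `[t₀,∞)`,
the Caputo fractional derivative satisfies
`ᶜD^α_{t₀}(u²)(t) ≤ 2u(t) ᶜD^α_{t₀}u(t)` for all `t ≥ t₀`. -/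
theorem caputo_sq_estimate (α t₀ : ℝ) (hα : 0 < α) (hα1 : α < 1)
    (u : ℝ → ℝ) (hu : ContDiffOn ℝ 1 u (Set.Ici t₀)) :
    ∀ t : ℝ, t₀ ≤ t →
      caputoDeriv α t₀ (fun x => u x ^ 2) t ≤ 2 * u t * caputoDeriv α t₀ u t := by
  intro t ht
  rcases eq_or_lt_of_le ht with heq | hlt
  · subst heq
    simp [caputoDeriv, intervalIntegral.integral_same]
  · have hΓ : 0 < Real.Gamma (1 - α) := Real.Gamma_pos_of_pos (by linarith)
    set φ := derivWithin u (Set.Ici t₀) with hφ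
    have hφc : ContinuousOn φ (Set.Ici t₀) :=
      hu.continuousOn_derivWithin (uniqueDiffOn_Ici t₀) le_rfl
    have huc : ContinuousOn u (Set.Ici t₀) := hu.continuousOn
    have hud : ∀ x, t₀ < x → HasDerivAt u (φ x) x := by
      intro x hx
      have hd : DifferentiableAt ℝ u x :=
        ((hu.differentiableOn one_ne_zero) x hx.le).differentiableAt (Ici_mem_nhds hx)
      have : φ x = deriv u x := derivWithin_of_mem_nhds (Ici_mem_nhds hx)
      rw [this]; exact hd.hasDerivAt
    have hw_int : IntervalIntegrable (fun x => (t - x) ^ (-α)) volume t₀ t := by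
      have h0 : IntervalIntegrable (fun y : ℝ => y ^ (-α)) volume (t - t₀) 0 :=
        intervalIntegrable_rpow' (by linarith)
      have h1 := h0.comp_sub_left t
      simpa [sub_sub_cancel, sub_zero] using h1
    have hmul_int : ∀ (g : ℝ → ℝ), ContinuousOn g (Set.Icc t₀ t) →
        IntervalIntegrable (fun x => g x * (t - x) ^ (-α)) volume t₀ t := by
      intro g hg
      exact hw_int.continuousOn_mul (by rwa [Set.uIcc_of_le hlt.le])
    -- replace deriv by φ inside the integrals
    have hB : (∫ x in t₀..t, deriv u x * (t - x) ^ (-α))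
        = ∫ x in t₀..t, φ x * (t - x) ^ (-α) := by
      apply intervalIntegral.integral_congr_ae
      filter_upwards with x hx
      rw [Set.uIoc_of_le hlt.le] at hx
      rw [← derivWithin_of_mem_nhds (Ici_mem_nhds hx.1)]
    have hA : (∫ x in t₀..t, deriv (fun y => u y ^ 2) x * (t - x) ^ (-α))
        = ∫ x in t₀..t, (2 * u x * φ x) * (t - x) ^ (-α) := by
      apply intervalIntegral.integral_congr_ae
      filter_upwards with x hx
      rw [Set.uIoc_of_le hlt.le] at hx
      have hDer := ((hud x hx.1).pow 2).deriv
      rw [show deriv (fun y => u y ^ 2) x = deriv (u ^ 2) x from rfl, hDer]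
      norm_num
    have hucs : ContinuousOn u (Set.Icc t₀ t) := huc.mono Set.Icc_subset_Ici_self
    have hφcs : ContinuousOn φ (Set.Icc t₀ t) := hφc.mono Set.Icc_subset_Ici_self
    have hint1 : IntervalIntegrable (fun x => 2 * u t * (φ x * (t - x) ^ (-α)))
        volume t₀ t := by
      have := hmul_int (fun x => 2 * u t * φ x) (continuousOn_const.mul hφcs)
      simpa [mul_assoc] using this
    have hint2 : IntervalIntegrable (fun x => (2 * u x * φ x) * (t - x) ^ (-α))
        volume t₀ t :=
      hmul_int _ ((continuousOn_const.mul hucs).mul hφcs)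
    have hkey := caputo_key α t₀ t hα hα1 hlt u hu
    have hmain : (∫ x in t₀..t, (2 * u x * φ x) * (t - x) ^ (-α))
        ≤ 2 * u t * ∫ x in t₀..t, φ x * (t - x) ^ (-α) := by
      rw [← sub_nonneg,
        show (2 * u t * ∫ x in t₀..t, φ x * (t - x) ^ (-α))
          = ∫ x in t₀..t, 2 * u t * (φ x * (t - x) ^ (-α)) from
          (intervalIntegral.integral_const_mul _ _).symm,
        ← intervalIntegral.integral_sub hint1 hint2]
      refine le_trans hkey (le_of_eq ?_)
      apply intervalIntegral.integral_congr
      intro x hx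
      ring
    unfold caputoDeriv
    rw [hA, hB]
    calc 1 / Real.Gamma (1 - α) * ∫ x in t₀..t, (2 * u x * φ x) * (t - x) ^ (-α)
        ≤ 1 / Real.Gamma (1 - α) *
            (2 * u t * ∫ x in t₀..t, φ x * (t - x) ^ (-α)) := by
          apply mul_le_mul_of_nonneg_left hmain (by positivity)
      _ = 2 * u t * (1 / Real.Gamma (1 - α) * ∫ x in t₀..t, φ x * (t - x) ^ (-α)) := by
          ring
end

section
/- Let 0 < α < 1, t₀ ∈ ℝ, t ≥ t₀, let u : [t₀, t] → (0,∞) be continuously differentiable, and let g : (0,∞) → ℝ be positive, differentiable, and strictly increasing. Then ∫_{t₀}^{t} u'(x) (1 − g(u(t))/g(u(x))) exp(−(α/(1−α))(t−x)) dx ≤ 0. -/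
set_option maxHeartbeats 1000000

open Set MeasureTheory intervalIntegral

/-- For `0 < α < 1`, `t ≥ t₀`, `u` positive and continuously differentiable on `[t₀,t]`,
and `g` positive, differentiable and strictly increasing on `(0,∞)`, one has
`∫_{t₀}^{t} u'(x)(1 − g(u(t))/g(u(x))) exp(−(α/(1−α))(t−x)) dx ≤ 0`. -/
theorem exp_kernel_integral_nonpos (α t₀ t : ℝ) (hα : 0 < α) (hα1 : α < 1) (ht : t₀ ≤ t)
    (u : ℝ → ℝ) (hu_pos : ∀ x ∈ Set.Icc t₀ t, 0 < u x)
    (hu : ContDiffOn ℝ 1 u (Set.Icc t₀ t))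
    (g : ℝ → ℝ)
    (hg_pos : ∀ s ∈ Set.Ioi (0 : ℝ), 0 < g s)
    (hg_diff : DifferentiableOn ℝ g (Set.Ioi 0))
    (hg_mono : StrictMonoOn g (Set.Ioi 0)) :
    (∫ x in t₀..t, deriv u x * (1 - g (u t) / g (u x)) *
        Real.exp (-(α / (1 - α)) * (t - x))) ≤ 0 := by
  rcases eq_or_lt_of_le ht with heq | hlt
  · rw [heq, intervalIntegral.integral_same]
  have h1α : 0 < 1 - α := by linarith
  set k := α / (1 - α) with hkdef
  have hk : 0 < k := div_pos hα h1α
  set c := g (u t) with hcdef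
  have hut : 0 < u t := hu_pos t ⟨ht, le_rfl⟩
  have hcpos : 0 < c := hg_pos _ hut
  have humaps : Set.MapsTo u (Set.Icc t₀ t) (Set.Ioi 0) := fun x hx => hu_pos x hx
  have hgu_cont : ContinuousOn (fun x => g (u x)) (Set.Icc t₀ t) :=
    hg_diff.continuousOn.comp hu.continuousOn humaps
  set w := derivWithin u (Set.Icc t₀ t) with hwdef
  have hw_cont : ContinuousOn w (Set.Icc t₀ t) :=
    hu.continuousOn_derivWithin (uniqueDiffOn_Icc hlt) le_rfl
  set f : ℝ → ℝ := fun x => w x * (1 - c / g (u x)) with hfdef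
  have hf_cont : ContinuousOn f (Set.Icc t₀ t) := by
    apply hw_cont.mul
    exact continuousOn_const.sub
      (continuousOn_const.div hgu_cont (fun x hx => (hg_pos _ (humaps hx)).ne'))
  -- the function ψ and its primitive G
  set ψ : ℝ → ℝ := fun v => 1 - c / g v with hψdef
  have hψ_cont : ContinuousOn ψ (Set.Ioi 0) :=
    continuousOn_const.sub (continuousOn_const.div hg_diff.continuousOn
      (fun v hv => (hg_pos v hv).ne'))
  set G : ℝ → ℝ := fun y => ∫ v in (u t)..y, ψ v with hGdef
  have hG_deriv : ∀ y ∈ Set.Ioi (0:ℝ), HasDerivAt G (ψ y) y := by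
    intro y hy
    apply intervalIntegral.integral_hasDerivAt_right
    · apply (hψ_cont.mono ?_).intervalIntegrable
      intro v hv
      exact lt_of_lt_of_le (lt_min hut hy) hv.1
    · exact AEStronglyMeasurable.stronglyMeasurableAtFilter_of_mem
        (hψ_cont.aestronglyMeasurable measurableSet_Ioi) (isOpen_Ioi.mem_nhds hy)
    · exact hψ_cont.continuousAt (isOpen_Ioi.mem_nhds hy)
  have hG_cont : ContinuousOn G (Set.Ioi 0) :=
    fun y hy => ((hG_deriv y hy).continuousAt).continuousWithinAt
  have hG_nonneg : ∀ y ∈ Set.Ioi (0:ℝ), 0 ≤ G y := by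
    intro y hy
    rcases le_total (u t) y with hle | hle
    · apply intervalIntegral.integral_nonneg hle
      intro v hv
      have hv0 : 0 < v := lt_of_lt_of_le hut hv.1
      have hcv : c ≤ g v := by
        rcases eq_or_lt_of_le hv.1 with h | h
        · rw [hcdef, ← h]
        · exact (hg_mono hut hv0 h).le
      have : c / g v ≤ 1 := (div_le_one (hg_pos v hv0)).mpr hcv
      simp only [hψdef]; linarith
    · have hsym : G y = -∫ v in y..(u t), ψ v := intervalIntegral.integral_symm y (u t)
      rw [hsym, neg_nonneg]
      have h0 : (0:ℝ) ≤ ∫ v in y..(u t), -ψ v := by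
        apply intervalIntegral.integral_nonneg hle
        intro v hv
        have hv0 : 0 < v := lt_of_lt_of_le hy hv.1
        have hvc : g v ≤ c := by
          rcases eq_or_lt_of_le hv.2 with h | h
          · rw [hcdef, h]
          · exact (hg_mono hv0 hut h).le
        have : 1 ≤ c / g v := (one_le_div (hg_pos v hv0)).mpr hvc
        simp only [hψdef]; linarith
      rw [intervalIntegral.integral_neg] at h0
      linarith
  -- FTC : the primitive of f along u
  have key : ∀ x ∈ Set.Icc t₀ t, (∫ s in x..t, f s) = G (u t) - G (u x) := by
    intro x hx
    have hsub : Set.Icc x t ⊆ Set.Icc t₀ t := Set.Icc_subset_Icc hx.1 le_rfl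
    apply intervalIntegral.integral_eq_sub_of_hasDeriv_right_of_le hx.2
    · exact hG_cont.comp (hu.continuousOn.mono hsub) (fun s hs => humaps (hsub hs))
    · intro s hs
      have hs' : s ∈ Set.Ioo t₀ t := ⟨lt_of_le_of_lt hx.1 hs.1, hs.2⟩
      have hsmem : s ∈ Set.Icc t₀ t := ⟨hs'.1.le, hs'.2.le⟩
      have hnhds : Set.Icc t₀ t ∈ nhds s := Icc_mem_nhds hs'.1 hs'.2
      have hus : HasDerivAt u (w s) s := by
        have hd : DifferentiableWithinAt ℝ u (Set.Icc t₀ t) s :=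
          hu.differentiableOn one_ne_zero s hsmem
        have hda := hd.differentiableAt hnhds
        have h1 : HasDerivAt u (deriv u s) s := hda.hasDerivAt
        rwa [hwdef, derivWithin_of_mem_nhds hnhds]
      have hGs : HasDerivAt G (ψ (u s)) (u s) := hG_deriv _ (hu_pos s hsmem)
      have hcomp := hGs.comp s hus
      have hfs : f s = ψ (u s) * w s := by simp only [hfdef, hψdef]; ring
      rw [hfs]
      exact hcomp.hasDerivWithinAt
    · apply (hf_cont.mono ?_).intervalIntegrable
      rw [Set.uIcc_of_le hx.2]; exact hsub
  have hGut : G (u t) = 0 := intervalIntegral.integral_same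
  have hφ_nonpos : ∀ x ∈ Set.Icc t₀ t, (∫ s in x..t, f s) ≤ 0 := by
    intro x hx
    rw [key x hx, hGut]
    linarith [hG_nonneg (u x) (hu_pos x hx)]
  -- continuous extension of f to ℝ
  set fe : ℝ → ℝ := fun x => f (max t₀ (min x t)) with hfedef
  have hfe_cont : Continuous fe := by
    apply hf_cont.comp_continuous
    · exact continuous_const.max (continuous_id.min continuous_const)
    · intro x; exact ⟨le_max_left _ _, max_le ht (min_le_right _ _)⟩
  have hfe_eq : ∀ x ∈ Set.Icc t₀ t, fe x = f x := by
    intro x hx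
    simp only [hfedef, min_eq_left hx.2, max_eq_right hx.1]
  -- the kernel K
  set K : ℝ → ℝ := fun x => Real.exp (-k * (t - x)) with hKdef
  have hK_pos : ∀ x, 0 < K x := fun x => Real.exp_pos _
  have hK_deriv : ∀ x : ℝ, HasDerivAt K (K x * k) x := by
    intro x
    have h1 : HasDerivAt (fun y : ℝ => -k * (t - y)) k x := by
      have := ((hasDerivAt_id x).const_sub t).const_mul (-k)
      simpa using this
    exact h1.exp
  -- the function φ
  set φ : ℝ → ℝ := fun x => ∫ s in x..t, fe s with hφdef
  have hφ_deriv : ∀ x : ℝ, HasDerivAt φ (-fe x) x := by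
    intro x
    have h1 : HasDerivAt (fun y => ∫ s in t..y, fe s) (fe x) x :=
      (hfe_cont.integral_hasStrictDerivAt t x).hasDerivAt
    have h2 : φ = fun y => -∫ s in t..y, fe s := by
      funext y
      exact intervalIntegral.integral_symm t y
    rw [h2]
    exact h1.neg
  have hφeq : ∀ x ∈ Set.Icc t₀ t, φ x = ∫ s in x..t, f s := by
    intro x hx
    apply intervalIntegral.integral_congr
    intro s hs
    rw [Set.uIcc_of_le hx.2] at hs
    exact hfe_eq s ⟨le_trans hx.1 hs.1, hs.2⟩
  have hφt : φ t = 0 := intervalIntegral.integral_same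
  -- integration by parts
  have hibp := intervalIntegral.integral_mul_deriv_eq_deriv_mul
    (a := t₀) (b := t) (u := φ) (v := K) (u' := fun x => -fe x) (v' := fun x => K x * k)
    (fun x _ => hφ_deriv x) (fun x _ => hK_deriv x)
    (by
      apply Continuous.intervalIntegrable
      exact hfe_cont.neg)
    (by
      apply Continuous.intervalIntegrable
      exact (Real.continuous_exp.comp (by continuity)).mul continuous_const)
  -- hibp : ∫ x in t₀..t, φ x * (K x * k) = φ t * K t - φ t₀ * K t₀ - ∫ x in t₀..t, -fe x * K x
  have hneg : (∫ x in t₀..t, -fe x * K x) = -∫ x in t₀..t, fe x * K x := by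
    rw [← intervalIntegral.integral_neg]
    congr 1; funext x; ring
  have hfeK : (∫ x in t₀..t, fe x * K x) =
      φ t₀ * K t₀ + ∫ x in t₀..t, φ x * (K x * k) := by
    rw [hneg, hφt] at hibp
    linarith
  have hterm1 : φ t₀ * K t₀ ≤ 0 := by
    have h1 : φ t₀ ≤ 0 := by
      rw [hφeq t₀ ⟨le_rfl, ht⟩]
      exact hφ_nonpos t₀ ⟨le_rfl, ht⟩
    exact mul_nonpos_of_nonpos_of_nonneg h1 (hK_pos t₀).le
  have hterm2 : (∫ x in t₀..t, φ x * (K x * k)) ≤ 0 := by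
    rw [← neg_nonneg, ← intervalIntegral.integral_neg]
    apply intervalIntegral.integral_nonneg ht
    intro x hx
    have h1 : φ x ≤ 0 := by
      rw [hφeq x hx]; exact hφ_nonpos x hx
    have h2 : 0 ≤ K x * k := mul_nonneg (hK_pos x).le hk.le
    have h3 := mul_nonneg (neg_nonneg.mpr h1) h2
    rw [neg_mul] at h3
    linarith
  have hfinal : (∫ x in t₀..t, fe x * K x) ≤ 0 := by
    rw [hfeK]; linarith
  -- identify the original integral with ∫ fe * K
  have hae : ∀ᵐ x ∂(volume : Measure ℝ), x ∈ Set.uIoc t₀ t →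
      deriv u x * (1 - c / g (u x)) * K x = fe x * K x := by
    have h2 : ∀ᵐ x ∂(volume : Measure ℝ), x ≠ t := by
      refine MeasureTheory.ae_iff.mpr ?_
      simp only [not_not]
      have hset : {x : ℝ | x = t} = {t} := by ext x; simp
      rw [hset]
      exact Real.volume_singleton
    filter_upwards [h2] with x hx hxmem
    rw [Set.uIoc_of_le ht] at hxmem
    have hxIoo : x ∈ Set.Ioo t₀ t := ⟨hxmem.1, lt_of_le_of_ne hxmem.2 hx⟩
    have hxIcc : x ∈ Set.Icc t₀ t := ⟨hxIoo.1.le, hxIoo.2.le⟩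
    have hnhds : Set.Icc t₀ t ∈ nhds x := Icc_mem_nhds hxIoo.1 hxIoo.2
    have hdw : deriv u x = w x := (derivWithin_of_mem_nhds hnhds).symm
    rw [hfe_eq x hxIcc, hfdef, hdw]
  calc (∫ x in t₀..t, deriv u x * (1 - c / g (u x)) * K x)
      = ∫ x in t₀..t, fe x * K x := intervalIntegral.integral_congr_ae hae
    _ ≤ 0 := hfinal
end

section
/- Let F : (0,∞) × (0,∞) → ℝ be continuously differentiable and satisfy hypotheses (H): F(S,I) = I·F₁(S,I) for a continuously differentiable function F₁ with ∂F₁/∂S > 0, ∂F₁/∂I ≤ 0 and F₁ > 0 on (0,∞)×(0,∞), and ∂F/∂I ≥ 0. Then for all S > 0 and all I, I* > 0, with G(x) = x − 1 − ln x, one has G(F(S,I)/F(S,I*)) ≤ G(I/I*). -/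
/-- The function `G(x) = x − 1 − ln x`. -/
noncomputable def Gfun (x : ℝ) : ℝ := x - 1 - Real.log x

/-- G is monotone on [1,∞). -/
lemma Gfun_mono_right {r t : ℝ} (hr : 1 ≤ r) (hrt : r ≤ t) : Gfun r ≤ Gfun t := by
  have hr0 : 0 < r := lt_of_lt_of_le one_pos hr
  have ht0 : 0 < t := lt_of_lt_of_le hr0 hrt
  have hlog : Real.log (t / r) ≤ t / r - 1 := Real.log_le_sub_one_of_pos (div_pos ht0 hr0)
  rw [Real.log_div (ne_of_gt ht0) (ne_of_gt hr0)] at hlog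
  have hdiv : t / r - 1 ≤ t - r := by
    rw [div_sub_one (ne_of_gt hr0), div_le_iff₀ hr0]
    nlinarith
  simp only [Gfun]
  linarith

/-- G is antitone on (0,1]. -/
lemma Gfun_anti_left {r t : ℝ} (ht0 : 0 < t) (htr : t ≤ r) (hr1 : r ≤ 1) : Gfun r ≤ Gfun t := by
  have hr0 : 0 < r := lt_of_lt_of_le ht0 htr
  have hlog : Real.log (t / r) ≤ t / r - 1 := Real.log_le_sub_one_of_pos (div_pos ht0 hr0)
  rw [Real.log_div (ne_of_gt ht0) (ne_of_gt hr0)] at hlog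
  have hdiv : t / r - 1 ≤ t - r := by
    rw [div_sub_one (ne_of_gt hr0), div_le_iff₀ hr0]
    nlinarith
  simp only [Gfun]
  linarith

/-- Let `F(S,I) = I·F₁(S,I)` satisfy hypotheses (H): `F₁` is continuously differentiable
and positive on `(0,∞)×(0,∞)`, strictly increasing in `S`, nonincreasing in `I`, and
`F` is nondecreasing in `I`. Then for all `S > 0` and `I, I* > 0`,
`G(F(S,I)/F(S,I*)) ≤ G(I/I*)` where `G(x) = x − 1 − ln x`. -/
theorem G_incidence_estimate (F₁ : ℝ → ℝ → ℝ)
    (hF₁ : ContDiffOn ℝ 1 (fun p : ℝ × ℝ => F₁ p.1 p.2) (Set.Ioi 0 ×ˢ Set.Ioi 0))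
    (hF₁_pos : ∀ S > (0 : ℝ), ∀ I > (0 : ℝ), 0 < F₁ S I)
    (hF₁_S : ∀ S > (0 : ℝ), ∀ I > (0 : ℝ), 0 < deriv (fun s => F₁ s I) S)
    (hF₁_I : ∀ S > (0 : ℝ), ∀ I > (0 : ℝ), deriv (fun i => F₁ S i) I ≤ 0)
    (hF_I : ∀ S > (0 : ℝ), ∀ I > (0 : ℝ), 0 ≤ deriv (fun i => i * F₁ S i) I) :
    ∀ S > (0 : ℝ), ∀ I > (0 : ℝ), ∀ Istar > (0 : ℝ),
      Gfun ((I * F₁ S I) / (Istar * F₁ S Istar)) ≤ Gfun (I / Istar) := by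
  intro S hS I hI Istar hIstar
  -- differentiability of i ↦ F₁ S i on (0,∞)
  have hopen : IsOpen ((Set.Ioi 0 : Set ℝ) ×ˢ (Set.Ioi 0 : Set ℝ)) :=
    isOpen_Ioi.prod isOpen_Ioi
  have hdiff : ∀ i > (0:ℝ), DifferentiableAt ℝ (fun i => F₁ S i) i := by
    intro i hi
    have h1 : DifferentiableAt ℝ (fun p : ℝ × ℝ => F₁ p.1 p.2) (S, i) :=
      (hF₁.differentiableOn one_ne_zero).differentiableAt (hopen.mem_nhds ⟨hS, hi⟩)
    exact h1.comp i ((differentiableAt_const S).prodMk differentiableAt_id)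
  have hdifff : ∀ i > (0:ℝ), DifferentiableAt ℝ (fun i => i * F₁ S i) i := by
    intro i hi
    exact differentiableAt_id.mul (hdiff i hi)
  -- antitonicity of F₁ S · on positive reals
  have hanti : ∀ x > (0:ℝ), ∀ y, x ≤ y → F₁ S y ≤ F₁ S x := by
    intro x hx y hxy
    have hsub : Set.Icc x y ⊆ Set.Ioi 0 := fun z hz => lt_of_lt_of_le hx hz.1
    have h := antitoneOn_of_deriv_nonpos (convex_Icc x y)
      (fun z hz => ((hdiff z (hsub hz)).continuousAt).continuousWithinAt)
      (fun z hz => by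
        rw [interior_Icc] at hz
        exact (hdiff z (lt_trans hx hz.1)).differentiableWithinAt)
      (fun z hz => by
        rw [interior_Icc] at hz
        exact hF₁_I S hS z (lt_trans hx hz.1))
    exact h (Set.left_mem_Icc.2 hxy) (Set.right_mem_Icc.2 hxy) hxy
  -- monotonicity of i ↦ i * F₁ S i on positive reals
  have hmono : ∀ x > (0:ℝ), ∀ y, x ≤ y → x * F₁ S x ≤ y * F₁ S y := by
    intro x hx y hxy
    have hsub : Set.Icc x y ⊆ Set.Ioi 0 := fun z hz => lt_of_lt_of_le hx hz.1
    have h := monotoneOn_of_deriv_nonneg (convex_Icc x y)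
      (fun z hz => ((hdifff z (hsub hz)).continuousAt).continuousWithinAt)
      (fun z hz => by
        rw [interior_Icc] at hz
        exact (hdifff z (lt_trans hx hz.1)).differentiableWithinAt)
      (fun z hz => by
        rw [interior_Icc] at hz
        exact hF_I S hS z (lt_trans hx hz.1))
    exact h (Set.left_mem_Icc.2 hxy) (Set.right_mem_Icc.2 hxy) hxy
  have ha : 0 < F₁ S I := hF₁_pos S hS I hI
  have hb : 0 < F₁ S Istar := hF₁_pos S hS Istar hIstar
  have hden : 0 < Istar * F₁ S Istar := mul_pos hIstar hb
  have hnum : 0 < I * F₁ S I := mul_pos hI ha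
  rcases le_total Istar I with hle | hle
  · -- I* ≤ I : 1 ≤ r ≤ t
    have h1 : Istar * F₁ S Istar ≤ I * F₁ S I := hmono Istar hIstar I hle
    have h2 : F₁ S I ≤ F₁ S Istar := hanti Istar hIstar I hle
    apply Gfun_mono_right
    · rw [le_div_iff₀ hden]; linarith
    · rw [div_le_div_iff₀ hden hIstar]
      nlinarith [mul_le_mul_of_nonneg_left h2 (mul_pos hI hIstar).le]
  · -- I ≤ I* : t ≤ r ≤ 1
    have h1 : I * F₁ S I ≤ Istar * F₁ S Istar := hmono I hI Istar hle
    have h2 : F₁ S Istar ≤ F₁ S I := hanti I hI Istar hle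
    apply Gfun_anti_left (div_pos hI hIstar)
    · rw [div_le_div_iff₀ hIstar hden]
      nlinarith [mul_le_mul_of_nonneg_left h2 (mul_pos hI hIstar).le]
    · rw [div_le_one hden]; linarith
end

section
/- Let 0 < α < 1 and let Λ, d, σ, γ, β be positive parameters; set m₁ = σ^α + d^α, m₂ = γ^α + d^α, S₀ = Λ^α/d^α. Let F(S,I) = I·F₁(S,I) satisfy hypotheses (H) with F₁ continuous on (0,∞)×[0,∞), F₁(S,0) > 0 for S > 0, and set R₀ = (σ^α/(m₁m₂))·F₁(S₀,0). Let S, E, I : [0,∞) → (0,∞) be continuously differentiable and satisfy, for all t > 0, the Caputo fractional system ᶜD^α₀S(t) = Λ^α − d^α S(t) − F(S(t),I(t)), ᶜD^α₀E(t) = F(S(t),I(t)) − m₁E(t), ᶜD^α₀I(t) = σ^α E(t) − m₂ I(t). Define V₀(t) = ∫_{S₀}^{S(t)} (F₁(x,0) − F₁(S₀,0))/F₁(x,0) dx + E(t) + (m₁/σ^α) I(t). Then for all t > 0, ᶜD^α₀V₀(t) ≤ (1 − F₁(S₀,0)/F₁(S(t),0))·d^α(S₀ − S(t)) + (m₁m₂/σ^α)(R₀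 − 1)·I(t). -/
open MeasureTheory intervalIntegral Set Filter Topology


lemma kernel_intervalIntegrable {α : ℝ} (hα1 : α < 1) (t a b : ℝ) :
    IntervalIntegrable (fun x => (t - x) ^ (-α) : ℝ → ℝ) volume a b := by
  have h : IntervalIntegrable (fun x : ℝ => x ^ (-α)) volume (t - a) (t - b) :=
    intervalIntegral.intervalIntegrable_rpow' (by linarith)
  have h2 := h.comp_sub_left t
  simpa using h2

lemma mul_kernel_intervalIntegrable {α t : ℝ} (ht : 0 < t) (hα1 : α < 1)
    {ψ : ℝ → ℝ} (hψ : ContinuousOn ψ (Icc 0 t)) :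
    IntervalIntegrable (fun x => ψ x * (t - x) ^ (-α)) volume 0 t := by
  obtain ⟨M, hM⟩ := (isCompact_Icc (a := (0:ℝ)) (b := t)).exists_bound_of_continuousOn hψ
  have hM0 : 0 ≤ M := le_trans (norm_nonneg _) (hM 0 (by constructor <;> simp [ht.le]))
  have hker := (kernel_intervalIntegrable hα1 t 0 t).const_mul M
  refine hker.mono_fun ?_ ?_
  · have h1 : AEStronglyMeasurable ψ (volume.restrict (uIoc (0:ℝ) t)) := by
      rw [uIoc_of_le ht.le]
      exact (hψ.mono (Ioc_subset_Icc_self)).aestronglyMeasurable measurableSet_Ioc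
    have h2 : AEStronglyMeasurable (fun x : ℝ => (t - x) ^ (-α)) (volume.restrict (uIoc (0:ℝ) t)) := by
      apply Measurable.aestronglyMeasurable
      exact (measurable_const.sub measurable_id).pow measurable_const
    exact h1.mul h2
  · rw [uIoc_of_le ht.le]
    filter_upwards [ae_restrict_mem measurableSet_Ioc] with x hx
    have hker_nonneg : (0:ℝ) ≤ (t - x) ^ (-α) := Real.rpow_nonneg (by linarith [hx.2]) _
    have hb := hM x (Ioc_subset_Icc_self hx)
    simp only [norm_mul, Real.norm_eq_abs, abs_of_nonneg hker_nonneg]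
    exact mul_le_mul_of_nonneg_right (le_trans (by simpa using hb) (le_abs_self M)) hker_nonneg


lemma hasDerivAt_kernel {α t : ℝ} {x : ℝ} (hx : x < t) :
    HasDerivAt (fun y : ℝ => (t - y) ^ (-α)) (α * (t - x) ^ (-α - 1)) x := by
  have h1 : HasDerivAt (fun y : ℝ => t - y) (-1) x := by
    simpa using (hasDerivAt_id x).const_sub t
  have h2 := h1.rpow_const (p := -α) (Or.inl (by intro h; simp only [sub_eq_zero] at h; linarith))
  convert h2 using 1
  ring

lemma key_ineq {α t : ℝ} (hα : 0 < α) (hα1 : α < 1) (ht : 0 < t)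
    {φ φ' : ℝ → ℝ}
    (hφc : ContinuousOn φ (Icc 0 t))
    (hφd : ∀ x ∈ Ioc (0:ℝ) t, HasDerivAt φ (φ' x) x)
    (hφ0 : ∀ x ∈ Icc (0:ℝ) t, 0 ≤ φ x)
    (hφt : φ t = 0)
    (hφ't : φ' t = 0)
    (hint : IntervalIntegrable (fun x => φ' x * (t - x) ^ (-α)) volume 0 t) :
    (∫ x in (0:ℝ)..t, φ' x * (t - x) ^ (-α)) ≤ 0 := by
  set u : ℝ → ℝ := fun x => (t - x) ^ (-α) with hu
  set u' : ℝ → ℝ := fun x => α * (t - x) ^ (-α - 1) with hu'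
  have step1 : ∀ ε ∈ Ioo (0:ℝ) t,
      (∫ x in (0:ℝ)..(t - ε), φ' x * u x) ≤ φ (t - ε) * ε ^ (-α) := by
    intro ε hε
    have hle : (0:ℝ) ≤ t - ε := by linarith [hε.2]
    have hsub : Icc (0:ℝ) (t - ε) ⊆ Icc 0 t := Icc_subset_Icc le_rfl (by linarith [hε.1])
    have hucont : ContinuousOn u (Icc 0 (t - ε)) := by
      intro x hx
      refine (ContinuousAt.rpow_const (by fun_prop) (Or.inl ?_)).continuousWithinAt
      have := hx.2; intro h; rw [sub_eq_zero] at h; linarith [hε.1]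
    have hu'cont : ContinuousOn u' (Icc 0 (t - ε)) := by
      apply continuousOn_const.mul
      intro x hx
      refine (ContinuousAt.rpow_const (by fun_prop) (Or.inl ?_)).continuousWithinAt
      have := hx.2; intro h; rw [sub_eq_zero] at h; linarith [hε.1]
    have hprod : ContinuousOn (fun x => φ x * u x) (Icc 0 (t - ε)) :=
      (hφc.mono hsub).mul hucont
    have hderiv : ∀ x ∈ Ioo (0:ℝ) (t - ε),
        HasDerivWithinAt (fun y => φ y * u y) (φ' x * u x + φ x * u' x) (Ioi x) x := by
      intro x hx
      have h1 : HasDerivAt φ (φ' x) x := hφd x ⟨hx.1, by linarith [hx.2, hε.1]⟩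
      have h2 : HasDerivAt u (u' x) x := hasDerivAt_kernel (by linarith [hx.2, hε.1])
      exact (h1.mul h2).hasDerivWithinAt
    have hi1 : IntervalIntegrable (fun x => φ' x * u x) volume 0 (t - ε) :=
      hint.mono_set (by
        rw [uIcc_of_le hle, uIcc_of_le ht.le]
        exact Icc_subset_Icc le_rfl (by linarith [hε.1]))
    have hi2 : IntervalIntegrable (fun x => φ x * u' x) volume 0 (t - ε) :=
      ((hφc.mono hsub).mul hu'cont).intervalIntegrable_of_Icc hle
    have hFTC := integral_eq_sub_of_hasDeriv_right_of_le hle hprod hderiv (hi1.add hi2)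
    have hsplit : (∫ x in (0:ℝ)..(t - ε), (φ' x * u x + φ x * u' x)) =
        (∫ x in (0:ℝ)..(t - ε), φ' x * u x) + ∫ x in (0:ℝ)..(t - ε), φ x * u' x :=
      integral_add hi1 hi2
    have hnn : 0 ≤ ∫ x in (0:ℝ)..(t - ε), φ x * u' x := by
      apply intervalIntegral.integral_nonneg hle
      intro x hx
      exact mul_nonneg (hφ0 x (hsub hx))
        (mul_nonneg hα.le (Real.rpow_nonneg (by linarith [hx.2, hε.1]) _))
    have hφ0nn : 0 ≤ φ 0 * u 0 := mul_nonneg (hφ0 0 ⟨le_rfl, ht.le⟩)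
      (Real.rpow_nonneg (by linarith) _)
    have hval : u (t - ε) = ε ^ (-α) := by simp [hu]
    rw [hsplit] at hFTC
    have := hFTC
    rw [hval] at this
    linarith
  -- continuity of the primitive
  have hIcc : IntegrableOn (fun x => φ' x * u x) (Icc 0 t) volume :=
    (intervalIntegrable_iff_integrableOn_Icc_of_le ht.le).mp hint
  have hG : ContinuousOn (fun b => ∫ x in (0:ℝ)..b, φ' x * u x) (Icc 0 t) := by
    have h := intervalIntegral.continuousOn_primitive_interval
      (μ := volume) (f := fun x => φ' x * u x) (a := 0) (b := t)
      (by rwa [uIcc_of_le ht.le])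
    rwa [uIcc_of_le ht.le] at h
  have hmapIcc : Tendsto (fun ε : ℝ => t - ε) (𝓝[>] 0) (𝓝[Icc 0 t] t) := by
    rw [tendsto_nhdsWithin_iff]
    constructor
    · have : Tendsto (fun ε : ℝ => t - ε) (𝓝 0) (𝓝 (t - 0)) :=
        (continuous_const.sub continuous_id).tendsto 0
      simpa using this.mono_left nhdsWithin_le_nhds
    · filter_upwards [Ioo_mem_nhdsGT_of_mem (by exact ⟨le_rfl, ht⟩ : (0:ℝ) ∈ Ico 0 t)] with ε hε
      exact ⟨by linarith [hε.2], by linarith [hε.1]⟩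
  have htend1 : Tendsto (fun ε : ℝ => ∫ x in (0:ℝ)..(t - ε), φ' x * u x) (𝓝[>] (0:ℝ))
      (𝓝 (∫ x in (0:ℝ)..t, φ' x * u x)) :=
    (hG t (right_mem_Icc.mpr ht.le)).tendsto.comp hmapIcc
  -- the boundary term tends to 0
  have hder_t : HasDerivAt φ 0 t := hφ't ▸ hφd t ⟨ht, le_rfl⟩
  have hslope := hasDerivAt_iff_tendsto_slope.mp hder_t
  have hmap2 : Tendsto (fun ε : ℝ => t - ε) (𝓝[>] 0) (𝓝[≠] t) := by
    rw [tendsto_nhdsWithin_iff]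
    constructor
    · have : Tendsto (fun ε : ℝ => t - ε) (𝓝 0) (𝓝 (t - 0)) :=
        (continuous_const.sub continuous_id).tendsto 0
      simpa using this.mono_left nhdsWithin_le_nhds
    · filter_upwards [self_mem_nhdsWithin] with ε (hε : ε ∈ Ioi 0)
      have : (0:ℝ) < ε := hε
      simp only [mem_compl_iff, mem_singleton_iff]
      intro h; rw [sub_eq_self] at h; exact this.ne' h
  have h1 : Tendsto (fun ε : ℝ => slope φ t (t - ε)) (𝓝[>] 0) (𝓝 0) := hslope.comp hmap2
  have h2 : Tendsto (fun ε : ℝ => ε ^ (1 - α)) (𝓝[>] (0:ℝ)) (𝓝 0) := by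
    have hc := (Real.continuousAt_rpow_const 0 (1 - α) (Or.inr (by linarith))).tendsto
    rw [Real.zero_rpow (by intro h; linarith : (1:ℝ) - α ≠ 0)] at hc
    exact hc.mono_left nhdsWithin_le_nhds
  have h3 : Tendsto (fun ε : ℝ => slope φ t (t - ε) * (-(ε ^ (1 - α)))) (𝓝[>] (0:ℝ)) (𝓝 0) := by
    simpa using h1.mul h2.neg
  have htend2 : Tendsto (fun ε : ℝ => φ (t - ε) * ε ^ (-α)) (𝓝[>] (0:ℝ)) (𝓝 0) := by
    apply h3.congr'
    filter_upwards [self_mem_nhdsWithin] with ε (hε : ε ∈ Ioi 0)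
    have hεpos : (0:ℝ) < ε := hε
    have hpow : ε ^ ((1:ℝ) - α) = ε * ε ^ (-α) := by
      rw [show (1:ℝ) - α = 1 + (-α) by ring, Real.rpow_add hεpos, Real.rpow_one]
    rw [slope_def_field, hφt, hpow]
    field_simp
    rw [show t - ε - t = -ε by ring, sub_zero, div_neg, neg_neg, mul_div_assoc, mul_div_cancel₀ _ hεpos.ne']
  have hle2 : ∀ᶠ ε in 𝓝[>] (0:ℝ),
      (∫ x in (0:ℝ)..(t - ε), φ' x * u x) ≤ φ (t - ε) * ε ^ (-α) := by
    filter_upwards [Ioo_mem_nhdsGT_of_mem (by exact ⟨le_rfl, ht⟩ : (0:ℝ) ∈ Ico 0 t)] with ε hε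
    exact step1 ε hε
  exact le_of_tendsto_of_tendsto htend1 htend2 hle2



/-- For the Caputo fractional SEIR system with general incidence `F(S,I) = I·F₁(S,I)`
satisfying hypotheses (H), the Lyapunov functional
`V₀(t) = ∫_{S₀}^{S(t)} (F₁(x,0) − F₁(S₀,0))/F₁(x,0) dx + E(t) + (m₁/σ^α) I(t)`
satisfies, for all `t > 0`,
`ᶜD^α₀V₀(t) ≤ (1 − F₁(S₀,0)/F₁(S(t),0)) d^α (S₀ − S(t)) + (m₁m₂/σ^α)(R₀ − 1) I(t)`. -/
theorem seir_dfe_lyapunov_estimate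
    (α Λ d σ γ β : ℝ) (hα : 0 < α) (hα1 : α < 1)
    (hΛ : 0 < Λ) (hd : 0 < d) (hσ : 0 < σ) (hγ : 0 < γ) (hβ : 0 < β)
    (m₁ m₂ S₀ : ℝ)
    (hm₁ : m₁ = σ ^ α + d ^ α) (hm₂ : m₂ = γ ^ α + d ^ α) (hS₀ : S₀ = Λ ^ α / d ^ α)
    (F₁ : ℝ → ℝ → ℝ)
    (hF₁_cont : ContinuousOn (fun p : ℝ × ℝ => F₁ p.1 p.2) (Set.Ioi 0 ×ˢ Set.Ici 0))
    (hF₁_diff : ContDiffOn ℝ 1 (fun p : ℝ × ℝ => F₁ p.1 p.2) (Set.Ioi 0 ×ˢ Set.Ioi 0))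
    (hF₁_zero_pos : ∀ S > (0 : ℝ), 0 < F₁ S 0)
    (hF₁_pos : ∀ S > (0 : ℝ), ∀ I > (0 : ℝ), 0 < F₁ S I)
    (hF₁_S : ∀ S > (0 : ℝ), ∀ I ≥ (0 : ℝ), 0 < deriv (fun s => F₁ s I) S)
    (hF₁_I : ∀ S > (0 : ℝ), ∀ I ≥ (0 : ℝ), deriv (fun i => F₁ S i) I ≤ 0)
    (hF_I : ∀ S > (0 : ℝ), ∀ I ≥ (0 : ℝ), 0 ≤ deriv (fun i => i * F₁ S i) I)
    (R₀ : ℝ) (hR₀ : R₀ = σ ^ α / (m₁ * m₂) * F₁ S₀ 0)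
    (S E I : ℝ → ℝ)
    (hS_pos : ∀ t ∈ Set.Ici (0 : ℝ), 0 < S t)
    (hE_pos : ∀ t ∈ Set.Ici (0 : ℝ), 0 < E t)
    (hI_pos : ∀ t ∈ Set.Ici (0 : ℝ), 0 < I t)
    (hS_smooth : ContDiffOn ℝ 1 S (Set.Ici 0))
    (hE_smooth : ContDiffOn ℝ 1 E (Set.Ici 0))
    (hI_smooth : ContDiffOn ℝ 1 I (Set.Ici 0))
    (heqS : ∀ t > (0 : ℝ),
      caputoDeriv α 0 S t = Λ ^ α - d ^ α * S t - I t * F₁ (S t) (I t))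
    (heqE : ∀ t > (0 : ℝ),
      caputoDeriv α 0 E t = I t * F₁ (S t) (I t) - m₁ * E t)
    (heqI : ∀ t > (0 : ℝ),
      caputoDeriv α 0 I t = σ ^ α * E t - m₂ * I t)
    (V₀ : ℝ → ℝ)
    (hV₀ : ∀ t, V₀ t =
      (∫ x in S₀..S t, (F₁ x 0 - F₁ S₀ 0) / F₁ x 0) + E t + (m₁ / σ ^ α) * I t) :
    ∀ t > (0 : ℝ),
      caputoDeriv α 0 V₀ t ≤
        (1 - F₁ S₀ 0 / F₁ (S t) 0) * (d ^ α * (S₀ - S t)) +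
          m₁ * m₂ / σ ^ α * (R₀ - 1) * I t := by
  intro t ht
  have hΓ : 0 < Real.Gamma (1 - α) := Real.Gamma_pos_of_pos (by linarith)
  have hdα : (0:ℝ) < d ^ α := Real.rpow_pos_of_pos hd α
  have hσα : (0:ℝ) < σ ^ α := Real.rpow_pos_of_pos hσ α
  have hΛα : (0:ℝ) < Λ ^ α := Real.rpow_pos_of_pos hΛ α
  have hS₀pos : (0:ℝ) < S₀ := by rw [hS₀]; positivity
  have hm₁pos : 0 < m₁ := by rw [hm₁]; linarith
  have hm₂pos : 0 < m₂ := by rw [hm₂]; linarith [Real.rpow_pos_of_pos hγ α]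
  have ha0pos : 0 < F₁ S₀ 0 := hF₁_zero_pos S₀ hS₀pos
  set q : ℝ → ℝ := fun s => (F₁ s 0 - F₁ S₀ 0) / F₁ s 0 with hqdef
  set g : ℝ → ℝ := fun s => ∫ x in S₀..s, q x with hgdef
  -- continuity and monotonicity of s ↦ F₁ s 0
  have hf0cont : ContinuousOn (fun s => F₁ s 0) (Ioi 0) := by
    have heq : (fun s : ℝ => F₁ s 0) = (fun p : ℝ × ℝ => F₁ p.1 p.2) ∘ (fun s : ℝ => (s, 0)) := rfl
    rw [heq]
    exact hF₁_cont.comp ((continuous_id.prodMk continuous_const).continuousOn)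
      (fun x hx => ⟨hx, by simp⟩)
  have hf0pos : ∀ s ∈ Ioi (0:ℝ), 0 < F₁ s 0 := fun s hs => hF₁_zero_pos s hs
  have hf0mono : StrictMonoOn (fun s => F₁ s 0) (Ioi 0) := by
    apply strictMonoOn_of_deriv_pos (convex_Ioi 0) hf0cont
    intro x hx
    rw [interior_Ioi] at hx
    exact hF₁_S x hx 0 le_rfl
  have hqcont : ContinuousOn q (Ioi 0) :=
    (hf0cont.sub continuousOn_const).div hf0cont (fun x hx => (hf0pos x hx).ne')
  have hq_eq : ∀ s ∈ Ioi (0:ℝ), q s = 1 - F₁ S₀ 0 / F₁ s 0 := by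
    intro s hs
    have hne := (hf0pos s hs).ne'
    rw [hqdef]
    field_simp
  have hqmono : MonotoneOn q (Ioi 0) := by
    intro x hx y hy hxy
    rw [hq_eq x hx, hq_eq y hy]
    have h1 : 0 < F₁ x 0 := hf0pos x hx
    have h2 : F₁ x 0 ≤ F₁ y 0 := hf0mono.monotoneOn hx hy hxy
    have h3 : F₁ S₀ 0 / F₁ y 0 ≤ F₁ S₀ 0 / F₁ x 0 := by gcongr
    linarith
  have hqint : ∀ s ∈ Ioi (0:ℝ), ∀ r ∈ Ioi (0:ℝ), IntervalIntegrable q volume r s := by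
    intro s hs r hr
    apply (hqcont.mono ?_).intervalIntegrable
    intro x hx
    exact lt_of_lt_of_le (lt_min hr hs) hx.1
  have hg' : ∀ s ∈ Ioi (0:ℝ), HasDerivAt g (q s) s := by
    intro s hs
    exact intervalIntegral.integral_hasDerivAt_right (hqint s hs S₀ hS₀pos)
      (hqcont.stronglyMeasurableAtFilter isOpen_Ioi s hs)
      (hqcont.continuousAt (isOpen_Ioi.mem_nhds hs))
  have hgcont : ContinuousOn g (Ioi 0) :=
    fun s hs => ((hg' s hs).continuousAt).continuousWithinAt
  -- convexity-type inequality for g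
  have hgconv : ∀ p ∈ Ioi (0:ℝ), ∀ s ∈ Ioi (0:ℝ), q p * (s - p) ≤ g s - g p := by
    intro p hp s hs
    have hdiffeq : g s - g p = ∫ x in p..s, q x :=
      integral_interval_sub_left (hqint s hs S₀ hS₀pos) (hqint p hp S₀ hS₀pos)
    rcases le_or_gt p s with hps | hps
    · have hmono : (∫ x in p..s, q p) ≤ ∫ x in p..s, q x := by
        apply intervalIntegral.integral_mono_on hps intervalIntegrable_const
          (hqint s hs p hp)
        intro x hx
        exact hqmono hp (lt_of_lt_of_le hp hx.1) hx.1
      rw [intervalIntegral.integral_const] at hmono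
      rw [hdiffeq]
      calc q p * (s - p) = (s - p) • q p := by rw [smul_eq_mul]; ring
        _ ≤ _ := hmono
    · have hmono : (∫ x in s..p, q x) ≤ ∫ x in s..p, q p := by
        apply intervalIntegral.integral_mono_on hps.le (hqint p hp s hs)
          intervalIntegrable_const
        intro x hx
        exact hqmono (lt_of_lt_of_le hs hx.1) hp hx.2
      rw [intervalIntegral.integral_const, smul_eq_mul] at hmono
      rw [hdiffeq, intervalIntegral.integral_symm]
      nlinarith
  -- derivatives of the trajectories
  have hSd : ∀ x : ℝ, 0 < x → HasDerivAt S (deriv S x) x := by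
    intro x hx
    exact ((hS_smooth.contDiffAt (Ici_mem_nhds hx)).differentiableAt one_ne_zero).hasDerivAt
  have hEd : ∀ x : ℝ, 0 < x → HasDerivAt E (deriv E x) x := by
    intro x hx
    exact ((hE_smooth.contDiffAt (Ici_mem_nhds hx)).differentiableAt one_ne_zero).hasDerivAt
  have hId : ∀ x : ℝ, 0 < x → HasDerivAt I (deriv I x) x := by
    intro x hx
    exact ((hI_smooth.contDiffAt (Ici_mem_nhds hx)).differentiableAt one_ne_zero).hasDerivAt
  -- integrability of the kernels
  have hker_int : ∀ (f : ℝ → ℝ), ContDiffOn ℝ 1 f (Ici 0) →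
      IntervalIntegrable (fun x => deriv f x * (t - x) ^ (-α)) volume 0 t := by
    intro f hf
    have hD : ContinuousOn (derivWithin f (Ici 0)) (Icc 0 t) :=
      (hf.continuousOn_derivWithin (uniqueDiffOn_Ici 0) le_rfl).mono Icc_subset_Ici_self
    have hint := mul_kernel_intervalIntegrable ht hα1 hD
    rw [intervalIntegrable_iff_integrableOn_Ioc_of_le ht.le] at hint ⊢
    apply hint.congr_fun ?_ measurableSet_Ioc
    intro x hx
    simp only
    rw [derivWithin_of_mem_nhds (Ici_mem_nhds hx.1)]
  have intS := hker_int S hS_smooth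
  have intE := hker_int E hE_smooth
  have intI := hker_int I hI_smooth
  have hqScont : ContinuousOn (fun x => q (S x)) (Icc 0 t) :=
    hqcont.comp (hS_smooth.continuousOn.mono Icc_subset_Ici_self) (fun x hx => hS_pos x hx.1)
  have hφint : IntervalIntegrable
      (fun x => (q (S x) - q (S t)) * deriv S x * (t - x) ^ (-α)) volume 0 t := by
    have hDS : ContinuousOn (derivWithin S (Ici 0)) (Icc 0 t) :=
      (hS_smooth.continuousOn_derivWithin (uniqueDiffOn_Ici 0) le_rfl).mono Icc_subset_Ici_self
    have hψ : ContinuousOn (fun x => (q (S x) - q (S t)) * derivWithin S (Ici 0) x) (Icc 0 t) :=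
      (hqScont.sub continuousOn_const).mul hDS
    have hint := mul_kernel_intervalIntegrable ht hα1 hψ
    rw [intervalIntegrable_iff_integrableOn_Ioc_of_le ht.le] at hint ⊢
    apply hint.congr_fun ?_ measurableSet_Ioc
    intro x hx
    simp only
    rw [derivWithin_of_mem_nhds (Ici_mem_nhds hx.1)]
  -- the function φ
  set φ : ℝ → ℝ := fun x => g (S x) - g (S t) - q (S t) * (S x - S t) with hφdef
  have hφc : ContinuousOn φ (Icc 0 t) := by
    apply ContinuousOn.sub
    · apply ContinuousOn.sub
      · exact hgcont.comp (hS_smooth.continuousOn.mono Icc_subset_Ici_self)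
          (fun x hx => hS_pos x hx.1)
      · exact continuousOn_const
    · exact continuousOn_const.mul
        ((hS_smooth.continuousOn.mono Icc_subset_Ici_self).sub continuousOn_const)
  have hφd : ∀ x ∈ Ioc (0:ℝ) t,
      HasDerivAt φ ((q (S x) - q (S t)) * deriv S x) x := by
    intro x hx
    have hSx := hSd x hx.1
    have hgS : HasDerivAt (fun y => g (S y)) (q (S x) * deriv S x) x :=
      (hg' (S x) (hS_pos x hx.1.le)).comp x hSx
    have h2 : HasDerivAt (fun y => q (S t) * (S y - S t)) (q (S t) * deriv S x) x :=
      HasDerivAt.const_mul (q (S t)) (hSx.sub_const (S t))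
    have h3 := (hgS.sub_const (g (S t))).sub h2
    exact h3.congr_deriv (by ring)
  have hφ0 : ∀ x ∈ Icc (0:ℝ) t, 0 ≤ φ x := by
    intro x hx
    have := hgconv (S t) (hS_pos t ht.le) (S x) (hS_pos x hx.1)
    simp only [hφdef]
    linarith
  have hφt : φ t = 0 := by simp [hφdef]
  have hφ't : (q (S t) - q (S t)) * deriv S t = 0 := by ring
  have hKφ : (∫ x in (0:ℝ)..t, (q (S x) - q (S t)) * deriv S x * (t - x) ^ (-α)) ≤ 0 :=
    key_ineq hα hα1 ht hφc hφd hφ0 hφt hφ't hφint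
  -- derivative of V₀
  have hVd : ∀ x : ℝ, 0 < x → HasDerivAt V₀
      (q (S x) * deriv S x + deriv E x + (m₁ / σ ^ α) * deriv I x) x := by
    intro x hx
    have hVeq : V₀ = fun τ => g (S τ) + E τ + (m₁ / σ ^ α) * I τ := by
      funext τ
      rw [hV₀ τ]
    rw [hVeq]
    have hgS : HasDerivAt (fun y => g (S y)) (q (S x) * deriv S x) x :=
      (hg' (S x) (hS_pos x hx.le)).comp x (hSd x hx)
    exact (hgS.add (hEd x hx)).add (HasDerivAt.const_mul (m₁ / σ ^ α) (hId x hx))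
  -- decomposition of the Caputo derivative of V₀
  have hdecomp : (∫ x in (0:ℝ)..t, deriv V₀ x * (t - x) ^ (-α)) =
      q (S t) * (∫ x in (0:ℝ)..t, deriv S x * (t - x) ^ (-α))
      + (∫ x in (0:ℝ)..t, (q (S x) - q (S t)) * deriv S x * (t - x) ^ (-α))
      + (∫ x in (0:ℝ)..t, deriv E x * (t - x) ^ (-α))
      + (m₁ / σ ^ α) * (∫ x in (0:ℝ)..t, deriv I x * (t - x) ^ (-α)) := by
    have h1 : (∫ x in (0:ℝ)..t, deriv V₀ x * (t - x) ^ (-α)) =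
        ∫ x in (0:ℝ)..t, (q (S t) * (deriv S x * (t - x) ^ (-α))
          + (q (S x) - q (S t)) * deriv S x * (t - x) ^ (-α)
          + deriv E x * (t - x) ^ (-α)
          + (m₁ / σ ^ α) * (deriv I x * (t - x) ^ (-α))) := by
      apply intervalIntegral.integral_congr_ae
      apply Eventually.of_forall
      intro x hx
      rw [uIoc_of_le ht.le] at hx
      rw [(hVd x hx.1).deriv]
      ring
    rw [h1,
      intervalIntegral.integral_add (((intS.const_mul _).add hφint).add intE) (intI.const_mul _),
      intervalIntegral.integral_add ((intS.const_mul _).add hφint) intE,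
      intervalIntegral.integral_add (intS.const_mul _) hφint,
      intervalIntegral.integral_const_mul, intervalIntegral.integral_const_mul]
  have hcap : caputoDeriv α 0 V₀ t =
      q (S t) * caputoDeriv α 0 S t + caputoDeriv α 0 E t
      + (m₁ / σ ^ α) * caputoDeriv α 0 I t
      + (1 / Real.Gamma (1 - α)) *
        (∫ x in (0:ℝ)..t, (q (S x) - q (S t)) * deriv S x * (t - x) ^ (-α)) := by
    simp only [caputoDeriv]
    rw [hdecomp]
    ring
  have hbound : caputoDeriv α 0 V₀ t ≤
      q (S t) * caputoDeriv α 0 S t + caputoDeriv α 0 E t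
      + (m₁ / σ ^ α) * caputoDeriv α 0 I t := by
    rw [hcap]
    have hnp : (1 / Real.Gamma (1 - α)) *
        (∫ x in (0:ℝ)..t, (q (S x) - q (S t)) * deriv S x * (t - x) ^ (-α)) ≤ 0 :=
      mul_nonpos_of_nonneg_of_nonpos (by positivity) hKφ
    linarith
  rw [heqS t ht, heqE t ht, heqI t ht] at hbound
  -- final algebra
  have hStpos : 0 < S t := hS_pos t ht.le
  have hbpos : 0 < F₁ (S t) 0 := hF₁_zero_pos (S t) hStpos
  have hItpos : 0 < I t := hI_pos t ht.le
  have hc0pos : 0 < F₁ (S t) (I t) := hF₁_pos (S t) hStpos (I t) hItpos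
  -- antitonicity in I
  have hanti : AntitoneOn (fun i => F₁ (S t) i) (Ici 0) := by
    apply antitoneOn_of_deriv_nonpos (convex_Ici 0)
    · have heq : (fun i : ℝ => F₁ (S t) i)
          = (fun p : ℝ × ℝ => F₁ p.1 p.2) ∘ (fun i : ℝ => (S t, i)) := rfl
      rw [heq]
      exact hF₁_cont.comp ((continuous_const.prodMk continuous_id).continuousOn)
        (fun i hi => ⟨hStpos, hi⟩)
    · rw [interior_Ici]
      intro i hi
      have hopen : IsOpen (Ioi (0:ℝ) ×ˢ Ioi (0:ℝ)) := isOpen_Ioi.prod isOpen_Ioi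
      have hmem : ((S t, i) : ℝ × ℝ) ∈ Ioi (0:ℝ) ×ˢ Ioi (0:ℝ) := ⟨hStpos, hi⟩
      have hca := (hF₁_diff.contDiffAt (hopen.mem_nhds hmem)).differentiableAt one_ne_zero
      have hcomp : DifferentiableAt ℝ (fun i : ℝ => F₁ (S t) i) i := by
        have : (fun i : ℝ => F₁ (S t) i)
            = (fun p : ℝ × ℝ => F₁ p.1 p.2) ∘ (fun i : ℝ => (S t, i)) := rfl
        rw [this]
        exact hca.comp i ((differentiableAt_const _).prodMk differentiableAt_id)
      exact hcomp.differentiableWithinAt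
    · rw [interior_Ici]
      intro i hi
      exact hF₁_I (S t) hStpos i (le_of_lt hi)
  have hc0le : F₁ (S t) (I t) ≤ F₁ (S t) 0 :=
    hanti (self_mem_Ici) (mem_Ici.mpr hItpos.le) hItpos.le
  have hqSt : q (S t) = 1 - F₁ S₀ 0 / F₁ (S t) 0 := hq_eq (S t) hStpos
  have hΛeq : Λ ^ α = d ^ α * S₀ := by
    rw [hS₀]
    field_simp
  have hRterm : m₁ * m₂ / σ ^ α * (R₀ - 1) * I t
      = F₁ S₀ 0 * I t - m₁ * m₂ / σ ^ α * I t := by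
    rw [hR₀]
    field_simp
  rw [hqSt, hΛeq] at hbound
  rw [hRterm]
  have hkey : F₁ S₀ 0 / F₁ (S t) 0 * (I t * F₁ (S t) (I t)) ≤ F₁ S₀ 0 * I t := by
    have h1 : F₁ S₀ 0 / F₁ (S t) 0 * (I t * F₁ (S t) (I t))
        ≤ F₁ S₀ 0 / F₁ (S t) 0 * (I t * F₁ (S t) 0) := by
      gcongr
    have h2 : F₁ S₀ 0 / F₁ (S t) 0 * (I t * F₁ (S t) 0) = F₁ S₀ 0 * I t := by
      field_simp
    linarith
  have hid : (1 - F₁ S₀ 0 / F₁ (S t) 0) * (d ^ α * S₀ - d ^ α * S t - I t * F₁ (S t) (I t))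
      + (I t * F₁ (S t) (I t) - m₁ * E t) + m₁ / σ ^ α * (σ ^ α * E t - m₂ * I t)
      = (1 - F₁ S₀ 0 / F₁ (S t) 0) * (d ^ α * (S₀ - S t))
        + (F₁ S₀ 0 * I t - m₁ * m₂ / σ ^ α * I t)
        + (F₁ S₀ 0 / F₁ (S t) 0 * (I t * F₁ (S t) (I t)) - F₁ S₀ 0 * I t) := by
    field_simp
    ring
  linarith [hbound, hid, hkey]
end

section
/- Let 0 < α < 1 and let Λ, d, σ, γ be positive parameters; set m₁ = σ^α + d^α, m₂ = γ^α + d^α, S₀ = Λ^α/d^α. Let F(S,I) = I·F₁(S,I) satisfy hypotheses (H) with F₁ continuous on (0,∞)×[0,∞) and F₁(S,0) > 0 for S > 0, and set R₀ = (σ^α/(m₁m₂))·F₁(S₀,0). Let S, E, I : [0,∞) → (0,∞) be continuously differentiable solutions of the Caputo fractional system ᶜD^α₀S(t) = Λ^α − d^α S(t) − F(S(t),I(t)), ᶜD^α₀E(t) = F(S(t),I(t)) − m₁E(t), ᶜD^α₀I(t) = σ^α E(t) − m₂ I(t). If R₀ ≤ 1, then the Lyapunov functional V₀(t) = ∫_{S₀}^{S(t)}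 (F₁(x,0) − F₁(S₀,0))/F₁(x,0) dx + E(t) + (m₁/σ^α) I(t) satisfies ᶜD^α₀V₀(t) ≤ 0 for all t > 0. -/
open MeasureTheory Set intervalIntegral Filter

/-- Integrability of `h x * (t - x) ^ (-α)` on `[0, t]` for `h` continuous and `0 < α < 1`. -/
private lemma aux_integrable {α t : ℝ} (hα : 0 < α) (hα1 : α < 1) (ht : 0 < t)
    {h : ℝ → ℝ} (hh : ContinuousOn h (Set.Icc 0 t)) :
    IntervalIntegrable (fun x => h x * (t - x) ^ (-α)) volume 0 t := by
  obtain ⟨M, hM⟩ := (isCompact_Icc (a := (0:ℝ)) (b := t)).exists_bound_of_continuousOn hh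
  have hM0 : 0 ≤ M := le_trans (norm_nonneg _) (hM 0 (Set.left_mem_Icc.2 ht.le))
  have base : IntervalIntegrable (fun x : ℝ => (t - x) ^ (-α)) volume 0 t := by
    have h1 : IntervalIntegrable (fun x : ℝ => x ^ (-α)) volume 0 t :=
      intervalIntegral.intervalIntegrable_rpow' (by linarith)
    have h2 := (h1.comp_sub_left t).symm
    simpa using h2
  have hres : volume.restrict (Set.Ioc (0:ℝ) t) = volume.restrict (Set.Ioo (0:ℝ) t) :=
    (Measure.restrict_congr_set Ioo_ae_eq_Ioc).symm
  rw [intervalIntegrable_iff_integrableOn_Ioc_of_le ht.le] at base ⊢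
  unfold IntegrableOn at base ⊢
  rw [hres] at base ⊢
  have hmeas : AEStronglyMeasurable (fun x => h x * (t - x) ^ (-α))
      (volume.restrict (Set.Ioo (0:ℝ) t)) := by
    refine ContinuousOn.aestronglyMeasurable ?_ measurableSet_Ioo
    refine (hh.mono Set.Ioo_subset_Icc_self).mul ?_
    refine ((continuous_const.sub continuous_id).continuousOn).rpow_const ?_
    exact fun x hx => Or.inl (ne_of_gt (sub_pos.2 hx.2))
  refine (base.const_mul M).mono hmeas ?_
  filter_upwards [ae_restrict_mem measurableSet_Ioo] with x hx
  have h1 : (0:ℝ) ≤ (t - x) ^ (-α) := Real.rpow_nonneg (by linarith [hx.2]) _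
  have h2 : |h x| ≤ M := hM x (Set.Ioo_subset_Icc_self hx)
  have h3 : 0 ≤ h x * (t - x) ^ (-α) ∨ True := Or.inr trivial
  rw [Real.norm_eq_abs, Real.norm_eq_abs, abs_mul, abs_of_nonneg h1,
    abs_of_nonneg (mul_nonneg hM0 h1)]
  exact mul_le_mul_of_nonneg_right h2 h1

/-- For the Caputo fractional SEIR system with general incidence `F(S,I) = I·F₁(S,I)`
satisfying hypotheses (H), if the basic reproduction number satisfies `R₀ ≤ 1` then the
Lyapunov functional
`V₀(t) = ∫_{S₀}^{S(t)} (F₁(x,0) − F₁(S₀,0))/F₁(x,0) dx + E(t) + (m₁/σ^α) I(t)`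
satisfies `ᶜD^α₀V₀(t) ≤ 0` for all `t > 0`. -/
theorem seir_dfe_lyapunov_nonpos
    (α Λ d σ γ : ℝ) (hα : 0 < α) (hα1 : α < 1)
    (hΛ : 0 < Λ) (hd : 0 < d) (hσ : 0 < σ) (hγ : 0 < γ)
    (m₁ m₂ S₀ : ℝ)
    (hm₁ : m₁ = σ ^ α + d ^ α) (hm₂ : m₂ = γ ^ α + d ^ α) (hS₀ : S₀ = Λ ^ α / d ^ α)
    (F₁ : ℝ → ℝ → ℝ)
    (hF₁_cont : ContinuousOn (fun p : ℝ × ℝ => F₁ p.1 p.2) (Set.Ioi 0 ×ˢ Set.Ici 0))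
    (hF₁_diff : ContDiffOn ℝ 1 (fun p : ℝ × ℝ => F₁ p.1 p.2) (Set.Ioi 0 ×ˢ Set.Ioi 0))
    (hF₁_zero_pos : ∀ S > (0 : ℝ), 0 < F₁ S 0)
    (hF₁_pos : ∀ S > (0 : ℝ), ∀ I > (0 : ℝ), 0 < F₁ S I)
    (hF₁_S : ∀ S > (0 : ℝ), ∀ I ≥ (0 : ℝ), 0 < deriv (fun s => F₁ s I) S)
    (hF₁_I : ∀ S > (0 : ℝ), ∀ I ≥ (0 : ℝ), deriv (fun i => F₁ S i) I ≤ 0)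
    (hF_I : ∀ S > (0 : ℝ), ∀ I ≥ (0 : ℝ), 0 ≤ deriv (fun i => i * F₁ S i) I)
    (R₀ : ℝ) (hR₀ : R₀ = σ ^ α / (m₁ * m₂) * F₁ S₀ 0)
    (S E I : ℝ → ℝ)
    (hS_pos : ∀ t ∈ Set.Ici (0 : ℝ), 0 < S t)
    (hE_pos : ∀ t ∈ Set.Ici (0 : ℝ), 0 < E t)
    (hI_pos : ∀ t ∈ Set.Ici (0 : ℝ), 0 < I t)
    (hS_smooth : ContDiffOn ℝ 1 S (Set.Ici 0))
    (hE_smooth : ContDiffOn ℝ 1 E (Set.Ici 0))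
    (hI_smooth : ContDiffOn ℝ 1 I (Set.Ici 0))
    (heqS : ∀ t > (0 : ℝ),
      caputoDeriv α 0 S t = Λ ^ α - d ^ α * S t - I t * F₁ (S t) (I t))
    (heqE : ∀ t > (0 : ℝ),
      caputoDeriv α 0 E t = I t * F₁ (S t) (I t) - m₁ * E t)
    (heqI : ∀ t > (0 : ℝ),
      caputoDeriv α 0 I t = σ ^ α * E t - m₂ * I t)
    (hR₀_le : R₀ ≤ 1)
    (V₀ : ℝ → ℝ)
    (hV₀ : ∀ t, V₀ t =
      (∫ x in S₀..S t, (F₁ x 0 - F₁ S₀ 0) / F₁ x 0) + E t + (m₁ / σ ^ α) * I t) :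
    ∀ t > (0 : ℝ), caputoDeriv α 0 V₀ t ≤ 0 := by
  -- basic positivity
  have hΓ : 0 < Real.Gamma (1 - α) := Real.Gamma_pos_of_pos (by linarith)
  have hΓinv : 0 ≤ 1 / Real.Gamma (1 - α) := by positivity
  have hdα : 0 < d ^ α := Real.rpow_pos_of_pos hd α
  have hσα : 0 < σ ^ α := Real.rpow_pos_of_pos hσ α
  have hγα : 0 < γ ^ α := Real.rpow_pos_of_pos hγ α
  have hΛα : 0 < Λ ^ α := Real.rpow_pos_of_pos hΛ α
  have hm₁pos : 0 < m₁ := by rw [hm₁]; positivity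
  have hm₂pos : 0 < m₂ := by rw [hm₂]; positivity
  have hS₀pos : 0 < S₀ := by rw [hS₀]; positivity
  have hΛeq : Λ ^ α = d ^ α * S₀ := by
    rw [hS₀]; field_simp
  have hc₀ : 0 < F₁ S₀ 0 := hF₁_zero_pos S₀ hS₀pos
  -- continuity & monotonicity of F₁(·,0)
  have contF0 : ContinuousOn (fun y => F₁ y 0) (Set.Ioi 0) := by
    have : (fun y : ℝ => F₁ y 0) =
        (fun p : ℝ × ℝ => F₁ p.1 p.2) ∘ (fun y : ℝ => (y, (0:ℝ))) := rfl
    rw [this]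
    exact hF₁_cont.comp ((continuous_id.prodMk continuous_const).continuousOn)
      (fun y hy => ⟨hy, le_refl (0:ℝ)⟩)
  have monoF0 : MonotoneOn (fun y => F₁ y 0) (Set.Ioi 0) := by
    refine (strictMonoOn_of_deriv_pos (convex_Ioi 0) contF0 ?_).monotoneOn
    rw [interior_Ioi]
    exact fun x hx => hF₁_S x hx 0 le_rfl
  -- the function φ
  set φ : ℝ → ℝ := fun y => 1 - F₁ S₀ 0 / F₁ y 0 with hφdef
  have φcont : ContinuousOn φ (Set.Ioi 0) :=
    continuousOn_const.sub (continuousOn_const.div contF0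
      (fun y hy => ne_of_gt (hF₁_zero_pos y hy)))
  have φmono : MonotoneOn φ (Set.Ioi 0) := by
    intro x hx y hy hxy
    have h1 : F₁ x 0 ≤ F₁ y 0 := monoF0 hx hy hxy
    have h2 : 0 < F₁ x 0 := hF₁_zero_pos x hx
    have h3 : F₁ S₀ 0 / F₁ y 0 ≤ F₁ S₀ 0 / F₁ x 0 :=
      div_le_div_of_nonneg_left hc₀.le h2 h1
    simp only [hφdef]
    linarith
  have φS₀ : φ S₀ = 0 := by
    simp only [hφdef]
    rw [div_self (ne_of_gt hc₀)]; ring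
  have uIcc_pos : ∀ a > (0:ℝ), ∀ b > (0:ℝ), Set.uIcc a b ⊆ Set.Ioi 0 := by
    intro a ha b hb x hx
    exact lt_of_lt_of_le (lt_min ha hb) hx.1
  have φii : ∀ a > (0:ℝ), ∀ b > (0:ℝ), IntervalIntegrable φ volume a b := by
    intro a ha b hb
    exact (φcont.mono (uIcc_pos a ha b hb)).intervalIntegrable
  -- the primitive G
  set G : ℝ → ℝ := fun y => ∫ x in S₀..y, φ x with hGdef
  have hGderiv : ∀ y > (0:ℝ), HasDerivAt G (φ y) y := by
    intro y hy
    exact intervalIntegral.integral_hasDerivAt_right (φii S₀ hS₀pos y hy)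
      (φcont.stronglyMeasurableAtFilter isOpen_Ioi y hy)
      (φcont.continuousAt (isOpen_Ioi.mem_nhds hy))
  -- V₀ rewritten with G
  have hV₀' : ∀ x : ℝ, 0 < S x → V₀ x = G (S x) + E x + (m₁ / σ ^ α) * I x := by
    intro x hx
    rw [hV₀ x]
    congr 1
    congr 1
    refine intervalIntegral.integral_congr ?_
    intro u hu
    have hu0 : 0 < u := uIcc_pos S₀ hS₀pos (S x) hx hu
    have : F₁ u 0 ≠ 0 := ne_of_gt (hF₁_zero_pos u hu0)
    simp only [hφdef]
    field_simp
  -- derivatives within Ici 0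
  set SD : ℝ → ℝ := derivWithin S (Set.Ici 0) with hSDdef
  set ED : ℝ → ℝ := derivWithin E (Set.Ici 0) with hEDdef
  set ID : ℝ → ℝ := derivWithin I (Set.Ici 0) with hIDdef
  have hSDcont : ContinuousOn SD (Set.Ici 0) :=
    hS_smooth.continuousOn_derivWithin (uniqueDiffOn_Ici 0) le_rfl
  have hEDcont : ContinuousOn ED (Set.Ici 0) :=
    hE_smooth.continuousOn_derivWithin (uniqueDiffOn_Ici 0) le_rfl
  have hIDcont : ContinuousOn ID (Set.Ici 0) :=
    hI_smooth.continuousOn_derivWithin (uniqueDiffOn_Ici 0) le_rfl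
  have hSd : ∀ x > (0:ℝ), HasDerivAt S (SD x) x := by
    intro x hx
    have h2 : Set.Ici (0:ℝ) ∈ nhds x := Ici_mem_nhds hx
    have h1 : DifferentiableAt ℝ S x :=
      ((hS_smooth.differentiableOn one_ne_zero) x hx.le).differentiableAt h2
    have := h1.hasDerivAt
    rwa [show SD x = deriv S x from derivWithin_of_mem_nhds h2]
  have hEd : ∀ x > (0:ℝ), HasDerivAt E (ED x) x := by
    intro x hx
    have h2 : Set.Ici (0:ℝ) ∈ nhds x := Ici_mem_nhds hx
    have h1 : DifferentiableAt ℝ E x :=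
      ((hE_smooth.differentiableOn one_ne_zero) x hx.le).differentiableAt h2
    have := h1.hasDerivAt
    rwa [show ED x = deriv E x from derivWithin_of_mem_nhds h2]
  have hId : ∀ x > (0:ℝ), HasDerivAt I (ID x) x := by
    intro x hx
    have h2 : Set.Ici (0:ℝ) ∈ nhds x := Ici_mem_nhds hx
    have h1 : DifferentiableAt ℝ I x :=
      ((hI_smooth.differentiableOn one_ne_zero) x hx.le).differentiableAt h2
    have := h1.hasDerivAt
    rwa [show ID x = deriv I x from derivWithin_of_mem_nhds h2]
  have hSWd : ∀ x ∈ Set.Ici (0:ℝ), HasDerivWithinAt S (SD x) (Set.Ici 0) x :=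
    fun x hx => ((hS_smooth.differentiableOn one_ne_zero) x hx).hasDerivWithinAt
  -- derivative of V₀
  have hVd : ∀ x > (0:ℝ),
      HasDerivAt V₀ (φ (S x) * SD x + ED x + (m₁ / σ ^ α) * ID x) x := by
    intro x hx
    have hev : V₀ =ᶠ[nhds x] (fun y => G (S y) + E y + (m₁ / σ ^ α) * I y) := by
      filter_upwards [isOpen_Ioi.mem_nhds hx] with y hy
      exact hV₀' y (hS_pos y (Set.mem_Ici.2 (le_of_lt hy)))
    have hGS : HasDerivAt (fun y => G (S y)) (φ (S x) * SD x) x :=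
      (hGderiv (S x) (hS_pos x hx.le)).comp x (hSd x hx)
    have := (hGS.add (hEd x hx)).add ((hId x hx).const_mul (m₁ / σ ^ α))
    exact this.congr_of_eventuallyEq hev
  -- fix t
  intro t ht
  set k : ℝ → ℝ := fun x => (t - x) ^ (-α) with hkdef
  have hknn : ∀ x ≤ t, 0 ≤ k x := fun x hx => Real.rpow_nonneg (by linarith) _
  have hIccIci : Set.Icc (0:ℝ) t ⊆ Set.Ici 0 := fun x hx => hx.1
  have hScont : ContinuousOn S (Set.Ici 0) := hS_smooth.continuousOn
  have hSmaps : ∀ x ∈ Set.Icc (0:ℝ) t, S x ∈ Set.Ioi (0:ℝ) :=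
    fun x hx => hS_pos x hx.1
  -- the convexity defect function w
  set w : ℝ → ℝ := fun x => G (S x) - G (S t) - φ (S t) * (S x - S t) with hwdef
  set wd : ℝ → ℝ := fun x => (φ (S x) - φ (S t)) * SD x with hwddef
  have hw_t : w t = 0 := by simp [hwdef]
  have hw_nonneg : ∀ x ∈ Set.Icc (0:ℝ) t, 0 ≤ w x := by
    intro x hx
    have hSx : 0 < S x := hS_pos x hx.1
    have hSt : 0 < S t := hS_pos t ht.le
    have eq1 : G (S x) - G (S t) = ∫ u in S t..S x, φ u :=
      intervalIntegral.integral_interval_sub_left (φii S₀ hS₀pos (S x) hSx)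
        (φii S₀ hS₀pos (S t) hSt)
    have eq2 : φ (S t) * (S x - S t) = ∫ u in S t..S x, φ (S t) := by
      rw [intervalIntegral.integral_const]
      simp [mul_comm]
    have eqw : w x = ∫ u in S t..S x, (φ u - φ (S t)) := by
      rw [intervalIntegral.integral_sub (φii (S t) hSt (S x) hSx)
        (intervalIntegrable_const), ← eq1, ← eq2]
    rw [eqw]
    rcases le_total (S t) (S x) with hle | hle
    · refine intervalIntegral.integral_nonneg hle ?_
      intro u hu
      have hu0 : 0 < u := lt_of_lt_of_le hSt hu.1
      have := φmono hSt hu0 hu.1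
      linarith
    · rw [intervalIntegral.integral_symm]
      have : (0:ℝ) ≤ ∫ u in S x..S t, (φ (S t) - φ u) := by
        refine intervalIntegral.integral_nonneg hle ?_
        intro u hu
        have hu0 : 0 < u := lt_of_lt_of_le hSx hu.1
        have := φmono hu0 hSt hu.2
        linarith
      have heq : (∫ u in S x..S t, (φ (S t) - φ u))
          = - ∫ u in S x..S t, (φ u - φ (S t)) := by
        rw [← intervalIntegral.integral_neg]
        congr 1
        funext u
        ring
      rw [heq] at this
      linarith
  have hw_deriv : ∀ x ∈ Set.Ici (0:ℝ), HasDerivWithinAt w (wd x) (Set.Ici 0) x := by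
    intro x hx
    have hSx : 0 < S x := hS_pos x hx
    have hG' : HasDerivAt G (φ (S x)) (S x) := hGderiv (S x) hSx
    have hcomp : HasDerivWithinAt (fun y => G (S y)) (φ (S x) * SD x) (Set.Ici 0) x :=
      hG'.comp_hasDerivWithinAt x (hSWd x hx)
    have h2 : HasDerivWithinAt (fun y => φ (S t) * (S y - S t))
        (φ (S t) * SD x) (Set.Ici 0) x :=
      ((hSWd x hx).sub_const (S t)).const_mul (φ (S t))
    have := (hcomp.sub_const (G (S t))).sub h2
    refine this.congr_deriv ?_
    show _ = (φ (S x) - φ (S t)) * SD x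
    ring
  have hw_cont : ContinuousOn w (Set.Ici 0) :=
    fun x hx => (hw_deriv x hx).continuousWithinAt
  have hwd_cont : ContinuousOn wd (Set.Ici 0) := by
    refine ContinuousOn.mul ?_ hSDcont
    refine ContinuousOn.sub ?_ continuousOn_const
    exact φcont.comp hScont (fun x hx => hS_pos x hx)
  -- bound on wd
  obtain ⟨C, hC⟩ := (isCompact_Icc (a := (0:ℝ)) (b := t)).exists_bound_of_continuousOn
    (hwd_cont.mono hIccIci)
  have hC0 : 0 ≤ C := le_trans (norm_nonneg _) (hC 0 (Set.left_mem_Icc.2 ht.le))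
  have hw_lip : ∀ s ∈ Set.Icc (0:ℝ) t, ‖w s‖ ≤ C * (t - s) := by
    intro s hs
    have := Convex.norm_image_sub_le_of_norm_hasDerivWithin_le
      (f := w) (f' := wd) (s := Set.Icc 0 t) (C := C)
      (fun x hx => (hw_deriv x (hIccIci hx)).mono hIccIci)
      hC (convex_Icc 0 t) (Set.right_mem_Icc.2 ht.le) hs
    rw [hw_t] at this
    have h2 : ‖s - t‖ = t - s := by
      rw [Real.norm_eq_abs, abs_sub_comm, abs_of_nonneg (by linarith [hs.2])]
    calc ‖w s‖ = ‖w s - 0‖ := by rw [sub_zero]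
    _ ≤ C * ‖s - t‖ := this
    _ = C * (t - s) := by rw [h2]
  -- integrability of wd * k on [0, t]
  have hwk_ii : IntervalIntegrable (fun x => wd x * k x) volume 0 t :=
    aux_integrable hα hα1 ht (hwd_cont.mono hIccIci)
  -- integration by parts estimate
  have hIBP : ∀ s ∈ Set.Ioo (0:ℝ) t, (∫ x in (0:ℝ)..s, wd x * k x) ≤ w s * k s := by
    intro s hs
    have husub : Set.uIcc (0:ℝ) s = Set.Icc 0 s := Set.uIcc_of_le hs.1.le
    have hIccs : Set.Icc (0:ℝ) s ⊆ Set.Icc 0 t :=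
      Set.Icc_subset_Icc le_rfl hs.2.le
    have hk' : ∀ x ∈ Set.Icc (0:ℝ) s,
        HasDerivAt k (α * (t - x) ^ (-α - 1)) x := by
      intro x hx
      have htx : (0:ℝ) < t - x := by
        have := hx.2; have := hs.2; linarith
      have hbase : HasDerivAt (fun y : ℝ => t - y) (-1) x := by
        simpa using (hasDerivAt_id x).const_sub t
      have := hbase.rpow_const (p := -α) (Or.inl (ne_of_gt htx))
      convert this using 1
      ring
    have hibp := intervalIntegral.integral_mul_deriv_eq_deriv_mul_of_hasDerivWithinAt
      (a := 0) (b := s) (u := k) (v := w)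
      (u' := fun x => α * (t - x) ^ (-α - 1)) (v' := wd)
      (fun x hx => ((hk' x (husub ▸ hx)).hasDerivWithinAt))
      (fun x hx => (hw_deriv x (hIccIci (hIccs (husub ▸ hx)))).mono
        (by rw [husub]; exact fun y hy => hy.1))
      (by
        refine ContinuousOn.intervalIntegrable ?_
        rw [husub]
        refine continuousOn_const.mul ?_
        refine ((continuous_const.sub continuous_id).continuousOn).rpow_const ?_
        intro x hx
        have := hx.2; have := hs.2
        exact Or.inl (ne_of_gt (by linarith : (0:ℝ) < t - x)))
      (by
        refine ContinuousOn.intervalIntegrable ?_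
        rw [husub]
        exact hwd_cont.mono (fun y hy => hIccIci (hIccs hy)))
    -- hibp : ∫ x in 0..s, k x * wd x = k s * w s - k 0 * w 0 - ∫ x in 0..s, (α * ...) * w x
    have e1 : (∫ x in (0:ℝ)..s, wd x * k x) = ∫ x in (0:ℝ)..s, k x * wd x := by
      refine intervalIntegral.integral_congr ?_
      intro x _
      ring
    have h2 : 0 ≤ k 0 * w 0 := by
      refine mul_nonneg (hknn 0 ht.le) (hw_nonneg 0 (Set.left_mem_Icc.2 ht.le))
    have h3 : 0 ≤ ∫ x in (0:ℝ)..s, (α * (t - x) ^ (-α - 1)) * w x := by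
      refine intervalIntegral.integral_nonneg hs.1.le ?_
      intro u hu
      have hut : u ≤ t := le_trans hu.2 hs.2.le
      refine mul_nonneg (mul_nonneg hα.le (Real.rpow_nonneg (by linarith) _)) ?_
      exact hw_nonneg u ⟨hu.1, hut⟩
    rw [e1, hibp]
    have : k s * w s = w s * k s := mul_comm _ _
    linarith [this]
  -- the limit s → t
  have hPt : (∫ x in (0:ℝ)..t, wd x * k x) ≤ 0 := by
    set P : ℝ → ℝ := fun s => ∫ x in (0:ℝ)..s, wd x * k x with hPdef
    have hPcont : ContinuousOn P (Set.uIcc 0 t) :=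
      intervalIntegral.continuousOn_primitive_interval' hwk_ii Set.left_mem_uIcc
    have hIoosub : Set.Ioo (0:ℝ) t ⊆ Set.uIcc 0 t := by
      rw [Set.uIcc_of_le ht.le]; exact Set.Ioo_subset_Icc_self
    haveI : (nhdsWithin t (Set.Ioo (0:ℝ) t)).NeBot := right_nhdsWithin_Ioo_neBot ht
    have tendsto1 : Tendsto P (nhdsWithin t (Set.Ioo 0 t)) (nhds (P t)) :=
      (hPcont t (Set.right_mem_uIcc)).mono hIoosub
    have tendsto2 : Tendsto (fun s => w s * k s) (nhdsWithin t (Set.Ioo 0 t)) (nhds 0) := by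
      have hbd : ∀ᶠ s in nhdsWithin t (Set.Ioo 0 t),
          ‖w s * k s‖ ≤ C * (t - s) ^ (1 - α) := by
        filter_upwards [self_mem_nhdsWithin] with s hs
        have hts : 0 < t - s := by linarith [hs.2]
        have h1 : ‖w s * k s‖ = ‖w s‖ * k s := by
          rw [norm_mul, Real.norm_eq_abs (k s), abs_of_nonneg (hknn s hs.2.le)]
        have h2 : ‖w s‖ * k s ≤ (C * (t - s)) * k s :=
          mul_le_mul_of_nonneg_right
            (hw_lip s ⟨hs.1.le, hs.2.le⟩) (hknn s hs.2.le)
        have h3 : (C * (t - s)) * k s = C * (t - s) ^ (1 - α) := by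
          simp only [hkdef]
          rw [show (1:ℝ) - α = 1 + (-α) by ring, Real.rpow_add hts, Real.rpow_one]
          ring
        rw [h1]
        linarith
      refine squeeze_zero_norm' hbd ?_
      have htend : Tendsto (fun s : ℝ => t - s) (nhdsWithin t (Set.Ioo 0 t)) (nhds 0) := by
        have : Tendsto (fun s : ℝ => t - s) (nhds t) (nhds (t - t)) :=
          (continuous_const.sub continuous_id).tendsto t
        rw [sub_self] at this
        exact this.mono_left nhdsWithin_le_nhds
      have hrpow : Tendsto (fun y : ℝ => y ^ (1 - α)) (nhds 0) (nhds 0) := by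
        have := (Real.continuousAt_rpow_const 0 (1 - α) (Or.inr (by linarith))).tendsto
        rwa [Real.zero_rpow (by linarith : (1:ℝ) - α ≠ 0)] at this
      have := (hrpow.comp htend).const_mul C
      simpa using this
    have hle : ∀ᶠ s in nhdsWithin t (Set.Ioo 0 t), P s ≤ w s * k s := by
      filter_upwards [self_mem_nhdsWithin] with s hs
      exact hIBP s hs
    exact le_of_tendsto_of_tendsto tendsto1 tendsto2 hle
  -- integrability of the pieces
  have hSDk_ii : IntervalIntegrable (fun x => SD x * k x) volume 0 t :=
    aux_integrable hα hα1 ht (hSDcont.mono hIccIci)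
  have hEDk_ii : IntervalIntegrable (fun x => ED x * k x) volume 0 t :=
    aux_integrable hα hα1 ht (hEDcont.mono hIccIci)
  have hIDk_ii : IntervalIntegrable (fun x => ID x * k x) volume 0 t :=
    aux_integrable hα hα1 ht (hIDcont.mono hIccIci)
  have hφSDk_ii : IntervalIntegrable (fun x => (φ (S x) * SD x) * k x) volume 0 t := by
    refine aux_integrable hα hα1 ht ?_
    refine ContinuousOn.mul ?_ (hSDcont.mono hIccIci)
    exact (φcont.comp (hScont.mono hIccIci) hSmaps)
  -- Caputo derivatives expressed with derivWithin
  have hcapS : caputoDeriv α 0 S t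
      = (1 / Real.Gamma (1 - α)) * ∫ x in (0:ℝ)..t, SD x * k x := by
    unfold caputoDeriv
    congr 1
    refine intervalIntegral.integral_congr_ae ?_
    refine Filter.Eventually.of_forall ?_
    intro x hx
    rw [Set.uIoc_of_le ht.le] at hx
    rw [show deriv S x = SD x from (derivWithin_of_mem_nhds (Ici_mem_nhds hx.1)).symm]
  have hcapE : caputoDeriv α 0 E t
      = (1 / Real.Gamma (1 - α)) * ∫ x in (0:ℝ)..t, ED x * k x := by
    unfold caputoDeriv
    congr 1
    refine intervalIntegral.integral_congr_ae (Filter.Eventually.of_forall ?_)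
    intro x hx
    rw [Set.uIoc_of_le ht.le] at hx
    rw [show deriv E x = ED x from (derivWithin_of_mem_nhds (Ici_mem_nhds hx.1)).symm]
  have hcapI : caputoDeriv α 0 I t
      = (1 / Real.Gamma (1 - α)) * ∫ x in (0:ℝ)..t, ID x * k x := by
    unfold caputoDeriv
    congr 1
    refine intervalIntegral.integral_congr_ae (Filter.Eventually.of_forall ?_)
    intro x hx
    rw [Set.uIoc_of_le ht.le] at hx
    rw [show deriv I x = ID x from (derivWithin_of_mem_nhds (Ici_mem_nhds hx.1)).symm]
  -- splitting the Caputo derivative of V₀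
  have hsplit : caputoDeriv α 0 V₀ t
      = (1 / Real.Gamma (1 - α)) * ((∫ x in (0:ℝ)..t, (φ (S x) * SD x) * k x)
        + (∫ x in (0:ℝ)..t, ED x * k x)
        + (m₁ / σ ^ α) * (∫ x in (0:ℝ)..t, ID x * k x)) := by
    unfold caputoDeriv
    congr 1
    have e1 : (∫ x in (0:ℝ)..t, deriv V₀ x * (t - x) ^ (-α))
        = ∫ x in (0:ℝ)..t, ((φ (S x) * SD x) * k x + (ED x * k x
          + ((m₁ / σ ^ α) * (ID x * k x)))) := by
      refine intervalIntegral.integral_congr_ae (Filter.Eventually.of_forall ?_)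
      intro x hx
      rw [Set.uIoc_of_le ht.le] at hx
      rw [(hVd x hx.1).deriv]
      simp only [hkdef]
      ring
    rw [e1]
    rw [intervalIntegral.integral_add hφSDk_ii
      (hEDk_ii.add (hIDk_ii.const_mul (m₁ / σ ^ α))),
      intervalIntegral.integral_add hEDk_ii (hIDk_ii.const_mul (m₁ / σ ^ α)),
      intervalIntegral.integral_const_mul]
    ring
  -- the key inequality for the first piece
  have hfirst : (∫ x in (0:ℝ)..t, (φ (S x) * SD x) * k x)
      ≤ φ (S t) * ∫ x in (0:ℝ)..t, SD x * k x := by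
    have e1 : (∫ x in (0:ℝ)..t, (φ (S x) * SD x) * k x)
        = (∫ x in (0:ℝ)..t, wd x * k x)
          + φ (S t) * ∫ x in (0:ℝ)..t, SD x * k x := by
      have e2 : (∫ x in (0:ℝ)..t, (φ (S x) * SD x) * k x)
          = ∫ x in (0:ℝ)..t, (wd x * k x + φ (S t) * (SD x * k x)) := by
        refine intervalIntegral.integral_congr ?_
        intro x _
        simp only [hwddef]
        ring
      rw [e2, intervalIntegral.integral_add hwk_ii (hSDk_ii.const_mul _),
        intervalIntegral.integral_const_mul]
    rw [e1]
    linarith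
  -- assembling
  have hmain : caputoDeriv α 0 V₀ t
      ≤ φ (S t) * caputoDeriv α 0 S t + caputoDeriv α 0 E t
        + (m₁ / σ ^ α) * caputoDeriv α 0 I t := by
    rw [hsplit, hcapS, hcapE, hcapI]
    have h1 : (1 / Real.Gamma (1 - α)) * ((∫ x in (0:ℝ)..t, (φ (S x) * SD x) * k x)
        + (∫ x in (0:ℝ)..t, ED x * k x)
        + (m₁ / σ ^ α) * (∫ x in (0:ℝ)..t, ID x * k x))
        ≤ (1 / Real.Gamma (1 - α)) * ((φ (S t) * ∫ x in (0:ℝ)..t, SD x * k x)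
        + (∫ x in (0:ℝ)..t, ED x * k x)
        + (m₁ / σ ^ α) * (∫ x in (0:ℝ)..t, ID x * k x)) := by
      refine mul_le_mul_of_nonneg_left ?_ hΓinv
      exact add_le_add_left (add_le_add_left hfirst _) _
    calc (1 / Real.Gamma (1 - α)) * ((∫ x in (0:ℝ)..t, (φ (S x) * SD x) * k x)
        + (∫ x in (0:ℝ)..t, ED x * k x)
        + (m₁ / σ ^ α) * (∫ x in (0:ℝ)..t, ID x * k x))
        ≤ (1 / Real.Gamma (1 - α)) * ((φ (S t) * ∫ x in (0:ℝ)..t, SD x * k x)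
        + (∫ x in (0:ℝ)..t, ED x * k x)
        + (m₁ / σ ^ α) * (∫ x in (0:ℝ)..t, ID x * k x)) := h1
    _ = φ (S t) * ((1 / Real.Gamma (1 - α)) * ∫ x in (0:ℝ)..t, SD x * k x)
        + (1 / Real.Gamma (1 - α)) * (∫ x in (0:ℝ)..t, ED x * k x)
        + (m₁ / σ ^ α) * ((1 / Real.Gamma (1 - α)) * ∫ x in (0:ℝ)..t, ID x * k x) := by
      ring
  -- final algebraic estimate
  have hSt : 0 < S t := hS_pos t ht.le
  have hIt : 0 < I t := hI_pos t ht.le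
  have hFSt0 : 0 < F₁ (S t) 0 := hF₁_zero_pos (S t) hSt
  have hFStI_le : F₁ (S t) (I t) ≤ F₁ (S t) 0 := by
    have hanti : AntitoneOn (fun i => F₁ (S t) i) (Set.Ici 0) := by
      refine antitoneOn_of_deriv_nonpos (convex_Ici 0) ?_ ?_ ?_
      · have : (fun i : ℝ => F₁ (S t) i) =
            (fun p : ℝ × ℝ => F₁ p.1 p.2) ∘ (fun i : ℝ => (S t, i)) := rfl
        rw [this]
        exact hF₁_cont.comp ((continuous_const.prodMk continuous_id).continuousOn)
          (fun i hi => ⟨hSt, hi⟩)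
      · rw [interior_Ici]
        have : (fun i : ℝ => F₁ (S t) i) =
            (fun p : ℝ × ℝ => F₁ p.1 p.2) ∘ (fun i : ℝ => (S t, i)) := rfl
        rw [this]
        refine DifferentiableOn.comp (hF₁_diff.differentiableOn one_ne_zero) ?_ ?_
        · exact (differentiable_const _).prodMk differentiable_id |>.differentiableOn
        · exact fun i hi => ⟨hSt, hi⟩
      · rw [interior_Ici]
        exact fun i hi => hF₁_I (S t) hSt i hi.le
    exact hanti (Set.self_mem_Ici) (Set.mem_Ici.2 hIt.le) hIt.le
  have hc₀eq : F₁ S₀ 0 = R₀ * (m₁ * m₂) / σ ^ α := by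
    rw [hR₀]
    field_simp
  have hbound : φ (S t) * (Λ ^ α - d ^ α * S t - I t * F₁ (S t) (I t))
      + (I t * F₁ (S t) (I t) - m₁ * E t)
      + (m₁ / σ ^ α) * (σ ^ α * E t - m₂ * I t) ≤ 0 := by
    have hstep : φ (S t) * (Λ ^ α - d ^ α * S t - I t * F₁ (S t) (I t))
        + (I t * F₁ (S t) (I t) - m₁ * E t)
        + (m₁ / σ ^ α) * (σ ^ α * E t - m₂ * I t)
        = φ (S t) * (d ^ α * (S₀ - S t))
          + I t * ((F₁ S₀ 0 / F₁ (S t) 0) * F₁ (S t) (I t) - m₁ * m₂ / σ ^ α) := by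
      have hφval : φ (S t) = 1 - F₁ S₀ 0 / F₁ (S t) 0 := rfl
      rw [hΛeq, hφval]
      field_simp
      ring
    rw [hstep]
    have hterm1 : φ (S t) * (d ^ α * (S₀ - S t)) ≤ 0 := by
      rcases le_total (S t) S₀ with hle | hle
      · have h1 : φ (S t) ≤ 0 := by
          have := φmono (Set.mem_Ioi.2 hSt) (Set.mem_Ioi.2 hS₀pos) hle
          rw [φS₀] at this
          linarith
        have h2 : 0 ≤ d ^ α * (S₀ - S t) := mul_nonneg hdα.le (by linarith)
        exact mul_nonpos_of_nonpos_of_nonneg h1 h2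
      · have h1 : 0 ≤ φ (S t) := by
          have := φmono (Set.mem_Ioi.2 hS₀pos) (Set.mem_Ioi.2 hSt) hle
          rw [φS₀] at this
          linarith
        have h2 : d ^ α * (S₀ - S t) ≤ 0 :=
          mul_nonpos_of_nonneg_of_nonpos hdα.le (by linarith)
        exact mul_nonpos_of_nonneg_of_nonpos h1 h2
    have hterm2 : I t * ((F₁ S₀ 0 / F₁ (S t) 0) * F₁ (S t) (I t) - m₁ * m₂ / σ ^ α) ≤ 0 := by
      have hcpos : 0 ≤ F₁ S₀ 0 / F₁ (S t) 0 := by positivity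
      have h1 : (F₁ S₀ 0 / F₁ (S t) 0) * F₁ (S t) (I t)
          ≤ (F₁ S₀ 0 / F₁ (S t) 0) * F₁ (S t) 0 :=
        mul_le_mul_of_nonneg_left hFStI_le hcpos
      have h2 : (F₁ S₀ 0 / F₁ (S t) 0) * F₁ (S t) 0 = F₁ S₀ 0 :=
        div_mul_cancel₀ _ (ne_of_gt hFSt0)
      have h3 : F₁ S₀ 0 ≤ m₁ * m₂ / σ ^ α := by
        rw [hc₀eq]
        have : R₀ * (m₁ * m₂) ≤ 1 * (m₁ * m₂) :=
          mul_le_mul_of_nonneg_right hR₀_le (by positivity)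
        rw [one_mul] at this
        exact (div_le_div_iff_of_pos_right hσα).2 this
      refine mul_nonpos_of_nonneg_of_nonpos hIt.le ?_
      linarith
    exact add_nonpos hterm1 hterm2
  -- finish
  have hfin : φ (S t) * caputoDeriv α 0 S t + caputoDeriv α 0 E t
      + (m₁ / σ ^ α) * caputoDeriv α 0 I t ≤ 0 := by
    rw [heqS t ht, heqE t ht, heqI t ht]
    exact hbound
  linarith
end
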